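/- arXiv:2201.00198 — 4 statements merged into one kernel-verified Lean document; each statement's English description precedes it below -/
import Mathlib

section
/- Let M be an n×n real symmetric matrix with induced signed graph Γ = (G,σ), and let λ_k be the k-th eigenvalue of M (eigenvalues listed in nondecreasing order with multiplicity) with multiplicity r. Then for any eigenvector f_k with Mf_k = λ_k f_k, the number of strong nodal domains satisfies 𝔖(f_k) ≤ k + r − 1. -/
open Matrix Polynomial

section NodalDefs

variable {V : Type*}

/-- The product of the signature over consecutive pairs of a list of vertices. -/
noncomputable def chainSign (σ : V → V → ℝ) (l : List V) : ℝ :=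
  ((l.zip l.tail).map fun p => σ p.1 p.2).prod

/-- One step of a strong nodal domain walk. -/
def SWalkStep (G : SimpleGraph V) (σ : V → V → ℝ) (f : V → ℝ) (u v : V) : Prop :=
  G.Adj u v ∧ 0 < f u * σ u v * f v

/-- `x` and `y` are connected by a strong nodal domain walk (S-walk). -/
def SConn (G : SimpleGraph V) (σ : V → V → ℝ) (f : V → ℝ) (x y : V) : Prop :=
  ∃ l : List V, 2 ≤ l.length ∧ l.Chain' (SWalkStep G σ f) ∧
    l.head? = some x ∧ l.getLast? = some y

/-- The strong nodal domain (as a vertex set) containing the non-zero `w`. -/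
def strongClass (G : SimpleGraph V) (σ : V → V → ℝ) (f : V → ℝ) (w : V) : Set V :=
  {x | f x ≠ 0 ∧ (x = w ∨ SConn G σ f x w)}

/-- The set of strong nodal domains (as vertex sets) of `f`. -/
def strongDomains (G : SimpleGraph V) (σ : V → V → ℝ) (f : V → ℝ) : Set (Set V) :=
  {D | ∃ w, f w ≠ 0 ∧ D = strongClass G σ f w}

/-- 𝔖(f): the number of strong nodal domains of `f`. -/
noncomputable def numStrong (G : SimpleGraph V) (σ : V → V → ℝ) (f : V → ℝ) : ℕ :=
  Nat.card (strongDomains G σ f)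

/-- A list of vertices is a weak nodal domain walk (W-walk). -/
def IsWWalk (G : SimpleGraph V) (σ : V → V → ℝ) (f : V → ℝ) (l : List V) : Prop :=
  2 ≤ l.length ∧ l.Chain' G.Adj ∧
    ∀ i j : Fin l.length, i < j → f (l.get i) ≠ 0 → f (l.get j) ≠ 0 →
      (∀ k : Fin l.length, i < k → k < j → f (l.get k) = 0) →
      0 < f (l.get i) * chainSign σ ((l.drop i.val).take (j.val - i.val + 1)) * f (l.get j)

/-- `x` and `y` are connected by a weak nodal domain walk (W-walk). -/
def WConn (G : SimpleGraph V) (σ : V → V → ℝ) (f : V → ℝ) (x y : V) : Prop :=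
  ∃ l : List V, IsWWalk G σ f l ∧ l.head? = some x ∧ l.getLast? = some y

/-- The weak nodal domain (as a vertex set) associated with the class of the non-zero `w`:
the class `W` of `w` together with all vertices having a W-walk to some vertex of `W`. -/
def weakClass (G : SimpleGraph V) (σ : V → V → ℝ) (f : V → ℝ) (w : V) : Set V :=
  {x | (f x ≠ 0 ∧ (x = w ∨ WConn G σ f x w)) ∨
       ∃ u, f u ≠ 0 ∧ (u = w ∨ WConn G σ f u w) ∧ WConn G σ f x u}

/-- The set of weak nodal domains (as vertex sets) of `f`. -/
def weakDomains (G : SimpleGraph V) (σ : V → V → ℝ) (f : V → ℝ) : Set (Set V) :=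
  {D | ∃ w, f w ≠ 0 ∧ D = weakClass G σ f w}

/-- 𝔚(f): the number of weak nodal domains of `f`. -/
noncomputable def numWeak (G : SimpleGraph V) (σ : V → V → ℝ) (f : V → ℝ) : ℕ :=
  Nat.card (weakDomains G σ f)

/-- `σ` is a valid signature on `G`: symmetric and ±1-valued on edges. -/
def IsSignature (G : SimpleGraph V) (σ : V → V → ℝ) : Prop :=
  (∀ x y, σ x y = σ y x) ∧ ∀ x y, G.Adj x y → σ x y = 1 ∨ σ x y = -1

/-- `M` is compatible with the signed graph `(G, σ)`: `(G, σ)` is the induced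
signed graph of `M`. -/
def Compatible (M : Matrix V V ℝ) (G : SimpleGraph V) (σ : V → V → ℝ) : Prop :=
  (∀ x y, G.Adj x y ↔ x ≠ y ∧ M x y ≠ 0) ∧
  (∀ x y, G.Adj x y → σ x y = -(M x y / |M x y|))

/-- A signed graph is balanced if every cycle has positive sign. -/
def IsBalanced (G : SimpleGraph V) (σ : V → V → ℝ) : Prop :=
  ∀ (x : V) (p : G.Walk x x), p.IsCycle → chainSign σ p.support = 1

/-- A signed graph is antibalanced if its negation is balanced. -/
def IsAntibalanced (G : SimpleGraph V) (σ : V → V → ℝ) : Prop :=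
  IsBalanced G (fun x y => -(σ x y))

/-- ℓ(G) = |E| - |V| + c(G), the cyclomatic number of `G`. -/
noncomputable def cyclomatic (G : SimpleGraph V) : ℕ :=
  Nat.card G.edgeSet + Nat.card G.ConnectedComponent - Nat.card V

/-- The subgraph of `G` on the edges `{x,y}` with `f x * σ x y * f y > 0`. -/
def posSubgraph (G : SimpleGraph V) (σ : V → V → ℝ) (f : V → ℝ) : SimpleGraph V where
  Adj x y := G.Adj x y ∧ 0 < f x * σ x y * f y ∧ 0 < f y * σ y x * f x
  symm := ⟨fun _ _ h => ⟨h.1.symm, h.2.2, h.2.1⟩⟩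
  loopless := ⟨fun x h => G.loopless.irrefl x h.1⟩

/-- `x` is tree-like: removing `x` and its incident edges increases the number of
connected components by `d_x - 1`. -/
def IsTreeLike (G : SimpleGraph V) (x : V) : Prop :=
  Nat.card (SimpleGraph.induce {y | y ≠ x} G).ConnectedComponent + 1
    = Nat.card G.ConnectedComponent + Nat.card (G.neighborSet x)

/-- The Fiedler zero set of `f` on `G`. -/
def fiedlerZeroSet (G : SimpleGraph V) (f : V → ℝ) : Set V :=
  {x | f x = 0 ∧ ((∀ y, G.Adj x y → f y = 0) ∨ ¬ IsTreeLike G x)}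

end NodalDefs

section SAux
variable {V : Type*} {G : SimpleGraph V} {σ : V → V → ℝ} {f : V → ℝ}

lemma transGen_of_chain {R : V → V → Prop} :
    ∀ (t : List V) (x b : V), List.Chain R x t → t.getLast? = some b →
      Relation.TransGen R x b := by
  intro t
  induction t with
  | nil => intro x b _ h; simp at h
  | cons a t ih =>
    intro x b hc hl
    rcases List.chain_cons.mp hc with ⟨hxa, hct⟩
    cases t with
    | nil => simp at hl; subst hl; exact Relation.TransGen.single hxa
    | cons c t' =>
      rw [List.getLast?_cons_cons] at hl
      exact Relation.TransGen.head hxa (ih a b hct hl)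

lemma sconn_iff {x y : V} :
    SConn G σ f x y ↔ Relation.TransGen (SWalkStep G σ f) x y := by
  constructor
  · rintro ⟨l, hlen, hch, hh, hlast⟩
    cases l with
    | nil => simp at hh
    | cons a t =>
      simp only [List.head?_cons, Option.some.injEq] at hh
      subst hh
      cases t with
      | nil => simp at hlen
      | cons c t' =>
        rw [List.getLast?_cons_cons] at hlast
        exact transGen_of_chain _ _ _ hch hlast
  · intro h
    induction h with
    | single h => exact ⟨[_, _], by simp, by show List.IsChain _ _; simp [List.isChain_cons_cons, h], rfl, rfl⟩
    | @tail b c _ h2 ih =>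
      obtain ⟨l, hlen, hch, hh, hlast⟩ := ih
      refine ⟨l ++ [c], by simp; omega, ?_, ?_, by simp⟩
      · show List.IsChain _ _
        rw [List.isChain_append]
        refine ⟨hch, List.isChain_singleton _, ?_⟩
        intro u hu v hv
        simp at hv; subst hv
        rw [hlast] at hu; simp at hu; subst hu; exact h2
      · cases l with
        | nil => simp at hlen
        | cons a t => simpa using hh

lemma swalkstep_symm (hσ : ∀ x y, σ x y = σ y x) {u v : V}
    (h : SWalkStep G σ f u v) : SWalkStep G σ f v u := by
  refine ⟨h.1.symm, ?_⟩
  have h2 := h.2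
  have : f v * σ v u * f u = f u * σ u v * f v := by rw [hσ v u]; ring
  linarith

lemma sconn_symm (hσ : ∀ x y, σ x y = σ y x) {x y : V}
    (h : SConn G σ f x y) : SConn G σ f y x := by
  rw [sconn_iff] at h ⊢
  induction h with
  | single h => exact Relation.TransGen.single (swalkstep_symm hσ h)
  | tail _ h2 ih => exact Relation.TransGen.head (swalkstep_symm hσ h2) ih

lemma sconn_trans {x y z : V} (h1 : SConn G σ f x y) (h2 : SConn G σ f y z) :
    SConn G σ f x z := by
  rw [sconn_iff] at h1 h2 ⊢
  exact h1.trans h2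

lemma strongClass_eq (hσ : ∀ x y, σ x y = σ y x) {x w : V} (hx : f x ≠ 0)
    (h : x = w ∨ SConn G σ f x w) : strongClass G σ f x = strongClass G σ f w := by
  rcases h with rfl | h
  · rfl
  ext z
  simp only [strongClass, Set.mem_setOf_eq]
  constructor
  · rintro ⟨hz, rfl | hzx⟩
    · exact ⟨hz, Or.inr h⟩
    · exact ⟨hz, Or.inr (sconn_trans hzx h)⟩
  · rintro ⟨hz, rfl | hzw⟩
    · exact ⟨hz, Or.inr (sconn_symm hσ h)⟩
    · exact ⟨hz, Or.inr (sconn_trans hzw (sconn_symm hσ h))⟩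

lemma mem_strongClass_self {w : V} (hw : f w ≠ 0) : w ∈ strongClass G σ f w :=
  ⟨hw, Or.inl rfl⟩

lemma strongClass_eq_of_mem (hσ : ∀ x y, σ x y = σ y x) {x w : V}
    (h : x ∈ strongClass G σ f w) : strongClass G σ f x = strongClass G σ f w :=
  strongClass_eq hσ h.1 h.2

end SAux
section CharAux
variable {n : ℕ}

lemma charpoly_conj_aux (U A : Matrix (Fin n) (Fin n) ℝ)
    (h1 : U * Uᵀ = 1) (h2 : Uᵀ * U = 1) :
    (U * A * Uᵀ).charpoly = A.charpoly := by
  classical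
  unfold Matrix.charpoly
  have hmm : ∀ (P Q : Matrix (Fin n) (Fin n) ℝ),
      (C : ℝ →+* ℝ[X]).mapMatrix (P * Q)
        = (C : ℝ →+* ℝ[X]).mapMatrix P * (C : ℝ →+* ℝ[X]).mapMatrix Q :=
    fun P Q => _root_.map_mul (C : ℝ →+* ℝ[X]).mapMatrix P Q
  have key : charmatrix (U * A * Uᵀ)
      = (C : ℝ →+* ℝ[X]).mapMatrix U * charmatrix A * (C : ℝ →+* ℝ[X]).mapMatrix Uᵀ := by
    unfold charmatrix
    rw [mul_sub, sub_mul]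
    congr 1
    · have hsc : (Matrix.scalar (Fin n) (X : ℝ[X])) = (X : ℝ[X]) • (1 : Matrix (Fin n) (Fin n) ℝ[X]) := by
        ext i j
        by_cases h : i = j <;> simp [h, Matrix.scalar_apply, Matrix.one_apply, Matrix.diagonal]
      rw [hsc, Matrix.mul_smul, Matrix.smul_mul]
      congr 1
      rw [Matrix.mul_one, ← hmm, h1, _root_.map_one (C : ℝ →+* ℝ[X]).mapMatrix]
    · rw [← hmm, ← hmm]
  rw [key, Matrix.det_mul, Matrix.det_mul]
  have hdet : ((C : ℝ →+* ℝ[X]).mapMatrix U).det * ((C : ℝ →+* ℝ[X]).mapMatrix Uᵀ).det = 1 := by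
    rw [← Matrix.det_mul, ← hmm, h1, _root_.map_one (C : ℝ →+* ℝ[X]).mapMatrix, Matrix.det_one]
  calc ((C : ℝ →+* ℝ[X]).mapMatrix U).det * (charmatrix A).det * ((C : ℝ →+* ℝ[X]).mapMatrix Uᵀ).det
      = (charmatrix A).det * (((C : ℝ →+* ℝ[X]).mapMatrix U).det * ((C : ℝ →+* ℝ[X]).mapMatrix Uᵀ).det) := by ring
    _ = (charmatrix A).det := by rw [hdet, mul_one]

lemma charpoly_diagonal_aux (d : Fin n → ℝ) :
    (Matrix.diagonal d).charpoly = ∏ i, (X - C (d i)) := by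
  classical
  unfold Matrix.charpoly
  have : charmatrix (Matrix.diagonal d) = Matrix.diagonal fun i => (X : ℝ[X]) - C (d i) := by
    ext i j
    by_cases h : i = j
    · subst h; simp
    · simp [h, Matrix.diagonal_apply_ne _ h]
  rw [this, Matrix.det_diagonal]

lemma multiset_eq_of_prod_eq (a b : Fin n → ℝ)
    (h : ∏ i, (X - C (a i)) = ∏ i, (X - C (b i))) :
    (Finset.univ.val.map a) = (Finset.univ.val.map b) := by
  classical
  have ha : (∏ i, (X - C (a i))) = ((Finset.univ.val.map a).map fun r => X - C r).prod := by
    rw [Multiset.map_map]; rfl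
  have hb : (∏ i, (X - C (b i))) = ((Finset.univ.val.map b).map fun r => X - C r).prod := by
    rw [Multiset.map_map]; rfl
  have := congrArg Polynomial.roots (ha ▸ hb ▸ h)
  rwa [Polynomial.roots_multiset_prod_X_sub_C, Polynomial.roots_multiset_prod_X_sub_C] at this

lemma count_le_eq_of_multiset_eq (a b : Fin n → ℝ) (lam : ℝ)
    (h : (Finset.univ.val.map a) = (Finset.univ.val.map b)) :
    (Finset.univ.filter fun i => a i ≤ lam).card
      = (Finset.univ.filter fun i => b i ≤ lam).card := by
  classical
  have := congrArg (Multiset.countP (fun r => r ≤ lam)) h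
  rwa [Multiset.countP_map, Multiset.countP_map] at this

end CharAux
section KeyBound
open Finset

lemma key_bound {n : ℕ} (M : Matrix (Fin n) (Fin n) ℝ) (hM : M.IsSymm)
    (G : SimpleGraph (Fin n)) (σ : Fin n → Fin n → ℝ)
    (hσ : IsSignature G σ) (hcompat : Compatible M G σ)
    (lam : ℝ) (f : Fin n → ℝ) (heig : M.mulVec f = lam • f)
    (U : Matrix (Fin n) (Fin n) ℝ) (eig : Fin n → ℝ)
    (hU1 : U * Uᵀ = 1)
    (hdiag : M = U * Matrix.diagonal eig * Uᵀ) :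
    numStrong G σ f ≤ (Finset.univ.filter fun i => eig i ≤ lam).card := by
  classical
  have hσs : ∀ x y, σ x y = σ y x := hσ.1
  set Dom := strongDomains G σ f with hDom
  haveI : Finite ↥Dom := Subtype.finite
  haveI : Fintype ↥Dom := Fintype.ofFinite _
  -- representatives
  have hrep : ∀ D : Dom, ∃ w, f w ≠ 0 ∧ (D : Set (Fin n)) = strongClass G σ f w := fun D => D.2
  choose w hw1 hw2 using hrep
  have hmemw : ∀ D : Dom, w D ∈ (D : Set (Fin n)) := by
    intro D; rw [hw2 D]; exact mem_strongClass_self (hw1 D)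
  have hne0 : ∀ (D : Dom) x, x ∈ (D : Set (Fin n)) → f x ≠ 0 := by
    intro D x hx; rw [hw2 D] at hx; exact hx.1
  have hclass : ∀ (D : Dom) x, x ∈ (D : Set (Fin n)) → strongClass G σ f x = (D : Set (Fin n)) := by
    intro D x hx; rw [hw2 D] at hx ⊢; exact strongClass_eq_of_mem hσs hx
  have hdisj : ∀ (D E : Dom), D ≠ E → ∀ x, x ∈ (D : Set (Fin n)) → x ∈ (E : Set (Fin n)) → False := by
    intro D E hDE x hxD hxE
    exact hDE (Subtype.ext ((hclass D x hxD).symm.trans (hclass E x hxE)))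
  -- the indicator vectors
  set gvec : Dom → (Fin n → ℝ) := fun D => (D : Set (Fin n)).indicator f with hgvec
  have hgv_mem : ∀ (D : Dom) x, x ∈ (D : Set (Fin n)) → gvec D x = f x := by
    intro D x hx; exact Set.indicator_of_mem hx f
  have hgv_nmem : ∀ (D : Dom) x, x ∉ (D : Set (Fin n)) → gvec D x = 0 := by
    intro D x hx; exact Set.indicator_of_notMem hx f
  have hsumg : ∀ x, ∑ D : Dom, gvec D x = f x := by
    intro x
    by_cases hx : f x = 0
    · rw [hx]
      apply Finset.sum_eq_zero
      intro D _
      apply hgv_nmem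
      intro hmem
      exact hne0 D x hmem hx
    · have hxD : (strongClass G σ f x) ∈ Dom := ⟨x, hx, rfl⟩
      set D₀ : Dom := ⟨strongClass G σ f x, hxD⟩ with hD₀
      have hxmem : x ∈ (D₀ : Set (Fin n)) := mem_strongClass_self hx
      rw [Finset.sum_eq_single D₀]
      · exact hgv_mem D₀ x hxmem
      · intro E _ hE
        apply hgv_nmem
        intro hmem
        exact hdisj E D₀ hE x hmem hxmem
      · intro h; exact absurd (Finset.mem_univ D₀) h
  -- cross-term nonnegativity
  have hcross : ∀ (D E : Dom), D ≠ E → ∀ x y, 0 ≤ gvec D x * (M x y * gvec E y) := by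
    intro D E hDE x y
    by_cases hxD : x ∈ (D : Set (Fin n))
    · by_cases hyE : y ∈ (E : Set (Fin n))
      · rw [hgv_mem D x hxD, hgv_mem E y hyE]
        by_contra hneg
        push_neg at hneg
        have hMxy : M x y ≠ 0 := by
          intro h0; rw [h0] at hneg; simp at hneg
        have hxy : x ≠ y := by
          intro h; subst h; exact hdisj D E hDE x hxD hyE
        have hadj : G.Adj x y := (hcompat.1 x y).mpr ⟨hxy, hMxy⟩
        have hsxy : σ x y = -(M x y / |M x y|) := hcompat.2 x y hadj
        have habs : (0:ℝ) < |M x y| := abs_pos.mpr hMxy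
        have hstep : SWalkStep G σ f x y := by
          refine ⟨hadj, ?_⟩
          rw [hsxy]
          have : f x * -(M x y / |M x y|) * f y = -(f x * (M x y * f y)) / |M x y| := by ring
          rw [this]
          apply div_pos _ habs
          linarith
        have hconn : SConn G σ f x y := sconn_iff.mpr (Relation.TransGen.single hstep)
        have hfx : f x ≠ 0 := hne0 D x hxD
        have : strongClass G σ f x = strongClass G σ f y := strongClass_eq hσs hfx (Or.inr hconn)
        have hyD : y ∈ (D : Set (Fin n)) := by
          rw [← hclass D x hxD, this]
          exact mem_strongClass_self (hne0 E y hyE)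
        exact hdisj D E hDE y hyD hyE
      · rw [hgv_nmem E y hyE]; simp
    · rw [hgv_nmem D x hxD]; simp
  -- pointwise eigen equation
  have hMf : ∀ x, ∑ y, M x y * f y = lam * f x := by
    intro x
    have h := congrFun heig x
    simpa [Matrix.mulVec, dotProduct, smul_eq_mul] using h
  -- the A matrix
  set A : ↥Dom → ↥Dom → ℝ := fun D E => ∑ x, ∑ y, gvec D x * (M x y * gvec E y) with hA
  have hMsymm : ∀ x y, M y x = M x y := by
    intro x y
    exact congrFun (congrFun hM x) y
  have hAoff : ∀ D E, D ≠ E → 0 ≤ A D E := by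
    intro D E hDE
    exact Finset.sum_nonneg fun x _ => Finset.sum_nonneg fun y _ => hcross D E hDE x y
  have hAsym : ∀ D E, A D E = A E D := by
    intro D E
    rw [hA]
    simp only
    rw [Finset.sum_comm]
    refine Finset.sum_congr rfl fun x _ => Finset.sum_congr rfl fun y _ => ?_
    rw [hMsymm x y]
    ring
  set d : ↥Dom → ℝ := fun D => ∑ x, gvec D x * gvec D x with hd
  have hdpos : ∀ D, 0 < d D := by
    intro D
    refine Finset.sum_pos' (fun x _ => mul_self_nonneg _) ⟨w D, Finset.mem_univ _, ?_⟩
    rw [hgv_mem D (w D) (hmemw D)]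
    exact mul_self_pos.mpr (hw1 D)
  have hrow : ∀ D, ∑ E, A D E = lam * d D := by
    intro D
    have h1 : ∑ E, A D E = ∑ x, gvec D x * (∑ y, M x y * f y) := by
      rw [Finset.sum_comm]
      refine Finset.sum_congr rfl fun x _ => ?_
      rw [Finset.mul_sum]
      rw [Finset.sum_comm]
      refine Finset.sum_congr rfl fun y _ => ?_
      rw [← hsumg y, Finset.mul_sum, Finset.mul_sum]
    rw [h1]
    rw [hd]
    simp only
    rw [Finset.mul_sum]
    refine Finset.sum_congr rfl fun x _ => ?_
    rw [hMf x]
    by_cases hx : x ∈ (D : Set (Fin n))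
    · rw [hgv_mem D x hx]; ring
    · rw [hgv_nmem D x hx]; ring
  have horth : ∀ D E, D ≠ E → ∀ x, gvec D x * gvec E x = 0 := by
    intro D E hDE x
    by_cases hx : x ∈ (D : Set (Fin n))
    · have : x ∉ (E : Set (Fin n)) := fun hxE => hdisj D E hDE x hx hxE
      rw [hgv_nmem E x this, mul_zero]
    · rw [hgv_nmem D x hx, zero_mul]
  -- count of small eigenvalues
  set S₀ : Finset (Fin n) := Finset.univ.filter (fun i => eig i ≤ lam) with hS₀
  by_contra hcon
  push_neg at hcon
  have hnum : numStrong G σ f = Fintype.card ↥Dom := by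
    rw [numStrong, Nat.card_eq_fintype_card]
  rw [hnum] at hcon
  -- pigeonhole: a nonzero kernel vector
  set B : Matrix {i // i ∈ S₀} ↥Dom ℝ :=
    Matrix.of (fun i D => ∑ x, U x i.1 * gvec D x) with hB
  have hninj : ¬ Function.Injective B.mulVecLin := by
    intro hinj
    have hle := LinearMap.finrank_le_finrank_of_injective hinj
    rw [Module.finrank_pi ℝ, Module.finrank_pi ℝ, Fintype.card_coe] at hle
    omega
  rw [injective_iff_map_eq_zero] at hninj
  push_neg at hninj
  obtain ⟨c, hcker, hc0⟩ := hninj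
  -- the test vector
  set g : Fin n → ℝ := fun x => ∑ D, c D * gvec D x with hg
  have hgw : ∀ D, g (w D) = c D * f (w D) := by
    intro D
    rw [hg]
    simp only
    rw [Finset.sum_eq_single D]
    · rw [hgv_mem D (w D) (hmemw D)]
    · intro E _ hE
      rw [hgv_nmem E (w D) (fun hmem => hdisj E D hE (w D) hmem (hmemw D)), mul_zero]
    · intro h; exact absurd (Finset.mem_univ D) h
  have hgne : g ≠ 0 := by
    obtain ⟨D₀, hD₀⟩ := Function.ne_iff.mp hc0
    intro h0
    have h1 := congrFun h0 (w D₀)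
    rw [hgw D₀, Pi.zero_apply, mul_eq_zero] at h1
    rcases h1 with h | h
    · exact hD₀ h
    · exact hw1 D₀ h
  have hU2 : Uᵀ * U = 1 := mul_eq_one_comm.mp hU1
  set cv : Fin n → ℝ := Uᵀ *ᵥ g with hcv
  have hker' : B *ᵥ c = 0 := by
    have h := hcker
    rwa [Matrix.mulVecLin_apply] at h
  have hcv0 : ∀ i, i ∈ S₀ → cv i = 0 := by
    intro i hi
    have hBi := congrFun hker' ⟨i, hi⟩
    rw [Pi.zero_apply] at hBi
    rw [hcv]
    have hstep : (Uᵀ *ᵥ g) i = ∑ D, B ⟨i, hi⟩ D * c D := by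
      show ∑ x, Uᵀ i x * g x = _
      calc ∑ x, Uᵀ i x * g x
          = ∑ x, ∑ D, c D * (U x i * gvec D x) := by
            refine Finset.sum_congr rfl fun x _ => ?_
            rw [hg, Matrix.transpose_apply]
            simp only
            rw [Finset.mul_sum]
            exact Finset.sum_congr rfl fun D _ => by ring
        _ = ∑ D, c D * ∑ x, U x i * gvec D x := by
            rw [Finset.sum_comm]
            exact Finset.sum_congr rfl fun D _ => by rw [Finset.mul_sum]
        _ = ∑ D, B ⟨i, hi⟩ D * c D := by
            refine Finset.sum_congr rfl fun D _ => ?_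
            rw [hB]
            simp only [Matrix.of_apply]
            ring
    rw [hstep]
    exact hBi
  have hgUcv : g = U *ᵥ cv := by
    rw [hcv, Matrix.mulVec_mulVec, hU1, Matrix.one_mulVec]
  have hcvne : cv ≠ 0 := by
    intro h0
    exact hgne (by rw [hgUcv, h0, Matrix.mulVec_zero])
  -- spectral identities
  have hQspec : g ⬝ᵥ (M *ᵥ g) = ∑ i, eig i * (cv i * cv i) := by
    rw [hdiag, ← Matrix.mulVec_mulVec, ← Matrix.mulVec_mulVec,
      Matrix.dotProduct_mulVec, ← Matrix.mulVec_transpose, ← hcv]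
    simp only [dotProduct, Matrix.mulVec_diagonal]
    exact Finset.sum_congr rfl fun i _ => by ring
  have hNspec : g ⬝ᵥ g = ∑ i, cv i * cv i := by
    conv_lhs => rw [hgUcv]
    rw [Matrix.dotProduct_mulVec, ← Matrix.mulVec_transpose,
      Matrix.mulVec_mulVec, hU2, Matrix.one_mulVec]
    rfl
  have hlampos : ∀ i, cv i ≠ 0 → lam < eig i := by
    intro i h0
    have hiS : i ∉ S₀ := fun hi => h0 (hcv0 i hi)
    by_contra hle
    push_neg at hle
    exact hiS (by rw [hS₀]; exact Finset.mem_filter.mpr ⟨Finset.mem_univ _, hle⟩)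
  have hlower : lam * (g ⬝ᵥ g) < g ⬝ᵥ (M *ᵥ g) := by
    rw [hQspec, hNspec, Finset.mul_sum]
    obtain ⟨i₀, hi₀⟩ := Function.ne_iff.mp hcvne
    have hi₀' : cv i₀ ≠ 0 := by simpa using hi₀
    refine Finset.sum_lt_sum (fun i _ => ?_) ⟨i₀, Finset.mem_univ _, ?_⟩
    · by_cases h0 : cv i = 0
      · rw [h0]; simp
      · exact mul_le_mul_of_nonneg_right (hlampos i h0).le (mul_self_nonneg _)
    · have h1 := hlampos i₀ hi₀'
      have h2 := mul_self_pos.mpr hi₀'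
      nlinarith
  -- the combinatorial upper bound
  have hterm : ∀ x y, g x * (M x y * g y)
      = ∑ D, ∑ E, (c D * c E) * (gvec D x * (M x y * gvec E y)) := by
    intro x y
    rw [hg]
    simp only
    rw [Finset.sum_mul]
    refine Finset.sum_congr rfl fun D _ => ?_
    rw [Finset.mul_sum, Finset.mul_sum]
    refine Finset.sum_congr rfl fun E _ => by ring
  have hQA : g ⬝ᵥ (M *ᵥ g) = ∑ D, ∑ E, (c D * c E) * A D E := by
    have hQ0 : g ⬝ᵥ (M *ᵥ g) = ∑ x, ∑ y, g x * (M x y * g y) := by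
      simp only [dotProduct, Matrix.mulVec, Finset.mul_sum]
    rw [hQ0]
    calc ∑ x, ∑ y, g x * (M x y * g y)
        = ∑ x, ∑ y, ∑ D, ∑ E, (c D * c E) * (gvec D x * (M x y * gvec E y)) :=
          Finset.sum_congr rfl fun x _ => Finset.sum_congr rfl fun y _ => hterm x y
      _ = ∑ x, ∑ D, ∑ y, ∑ E, (c D * c E) * (gvec D x * (M x y * gvec E y)) :=
          Finset.sum_congr rfl fun x _ => Finset.sum_comm
      _ = ∑ D, ∑ x, ∑ y, ∑ E, (c D * c E) * (gvec D x * (M x y * gvec E y)) :=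
          Finset.sum_comm
      _ = ∑ D, ∑ x, ∑ E, ∑ y, (c D * c E) * (gvec D x * (M x y * gvec E y)) :=
          Finset.sum_congr rfl fun D _ => Finset.sum_congr rfl fun x _ => Finset.sum_comm
      _ = ∑ D, ∑ E, ∑ x, ∑ y, (c D * c E) * (gvec D x * (M x y * gvec E y)) :=
          Finset.sum_congr rfl fun D _ => Finset.sum_comm
      _ = ∑ D, ∑ E, (c D * c E) * A D E := by
          refine Finset.sum_congr rfl fun D _ => Finset.sum_congr rfl fun E _ => ?_
          rw [hA]
          simp only
          rw [Finset.mul_sum]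
          exact Finset.sum_congr rfl fun x _ => by rw [Finset.mul_sum]
  have hNA : g ⬝ᵥ g = ∑ D, (c D * c D) * d D := by
    have hterm2 : ∀ x, g x * g x = ∑ D, ∑ E, (c D * c E) * (gvec D x * gvec E x) := by
      intro x
      rw [hg]
      simp only
      rw [Finset.sum_mul]
      refine Finset.sum_congr rfl fun D _ => ?_
      rw [Finset.mul_sum]
      exact Finset.sum_congr rfl fun E _ => by ring
    calc g ⬝ᵥ g = ∑ x, g x * g x := rfl
      _ = ∑ x, ∑ D, ∑ E, (c D * c E) * (gvec D x * gvec E x) :=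
          Finset.sum_congr rfl fun x _ => hterm2 x
      _ = ∑ D, ∑ x, ∑ E, (c D * c E) * (gvec D x * gvec E x) := Finset.sum_comm
      _ = ∑ D, ∑ E, ∑ x, (c D * c E) * (gvec D x * gvec E x) :=
          Finset.sum_congr rfl fun D _ => Finset.sum_comm
      _ = ∑ D, (c D * c D) * d D := by
          refine Finset.sum_congr rfl fun D _ => ?_
          rw [Finset.sum_eq_single D]
          · rw [hd]
            simp only
            rw [Finset.mul_sum]
          · intro E _ hE
            exact Finset.sum_eq_zero fun x _ => by
              rw [horth D E (Ne.symm hE) x, mul_zero]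
          · intro h; exact absurd (Finset.mem_univ D) h
  have hupper : g ⬝ᵥ (M *ᵥ g) ≤ lam * (g ⬝ᵥ g) := by
    rw [hQA, hNA, Finset.mul_sum]
    have step1 : ∑ D, ∑ E, (c D * c E) * A D E
        ≤ ∑ D, ∑ E, ((c D * c D + c E * c E) / 2) * A D E := by
      refine Finset.sum_le_sum fun D _ => Finset.sum_le_sum fun E _ => ?_
      by_cases hDE : D = E
      · subst hDE; apply le_of_eq; ring
      · nlinarith [hAoff D E hDE, sq_nonneg (c D - c E)]
    refine le_trans step1 (le_of_eq ?_)
    calc ∑ D, ∑ E, ((c D * c D + c E * c E) / 2) * A D E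
        = ∑ D, ∑ E, ((c D * c D / 2) * A D E + (c E * c E / 2) * A D E) :=
          Finset.sum_congr rfl fun D _ => Finset.sum_congr rfl fun E _ => by ring
      _ = ∑ D, ((∑ E, (c D * c D / 2) * A D E) + ∑ E, (c E * c E / 2) * A D E) :=
          Finset.sum_congr rfl fun D _ => Finset.sum_add_distrib
      _ = (∑ D, ∑ E, (c D * c D / 2) * A D E) + ∑ D, ∑ E, (c E * c E / 2) * A D E :=
          Finset.sum_add_distrib
      _ = (∑ D, (c D * c D / 2) * (lam * d D)) + ∑ E, (c E * c E / 2) * (lam * d E) := by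
          congr 1
          · exact Finset.sum_congr rfl fun D _ => by rw [← Finset.mul_sum, hrow D]
          · rw [Finset.sum_comm]
            refine Finset.sum_congr rfl fun E _ => ?_
            rw [← Finset.mul_sum]
            congr 1
            rw [Finset.sum_congr rfl fun D _ => hAsym D E, hrow E]
      _ = ∑ D, lam * ((c D * c D) * d D) := by
          rw [← Finset.sum_add_distrib]
          exact Finset.sum_congr rfl fun D _ => by ring
  exact absurd hupper (not_le.mpr hlower)



end KeyBound
/-- 𝔖(f_k) ≤ k + r - 1 (1-based k; here k is 0-based). -/
theorem stmt_9 (n : ℕ) (M : Matrix (Fin n) (Fin n) ℝ) (hM : M.IsSymm)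
    (G : SimpleGraph (Fin n)) (σ : Fin n → Fin n → ℝ)
    (hσ : IsSignature G σ) (hcompat : Compatible M G σ)
    (μ : Fin n → ℝ) (hmono : Monotone μ)
    (hchar : M.charpoly = ∏ i, (Polynomial.X - Polynomial.C (μ i)))
    (k : Fin n) (f : Fin n → ℝ) (hf : f ≠ 0) (heig : M.mulVec f = μ k • f) :
    numStrong G σ f ≤ (k : ℕ) + Nat.card {i : Fin n | μ i = μ k} := by
  classical
  have hHerm : M.IsHermitian := by
    rw [Matrix.IsHermitian, Matrix.conjTranspose_eq_transpose_of_trivial]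
    exact hM
  set U : Matrix (Fin n) (Fin n) ℝ := (hHerm.eigenvectorUnitary : Matrix (Fin n) (Fin n) ℝ)
    with hU
  set eig : Fin n → ℝ := hHerm.eigenvalues with heigdef
  have hstar : star U = Uᵀ := by
    rw [Matrix.star_eq_conjTranspose, Matrix.conjTranspose_eq_transpose_of_trivial]
  have hU1 : U * Uᵀ = 1 := by
    rw [← hstar]
    exact (Matrix.mem_unitaryGroup_iff).mp hHerm.eigenvectorUnitary.2
  have hdiag : M = U * Matrix.diagonal eig * Uᵀ := by
    rw [← hstar]
    have h := hHerm.spectral_theorem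
    rw [Unitary.conjStarAlgAut_apply] at h
    exact h
  have hcharEig : M.charpoly = ∏ i, (X - C (eig i)) := by
    conv_lhs => rw [hdiag]
    rw [charpoly_conj_aux U _ hU1 (mul_eq_one_comm.mp hU1), charpoly_diagonal_aux]
  have hms := multiset_eq_of_prod_eq μ eig (hchar.symm.trans hcharEig)
  have hkey := key_bound M hM G σ hσ hcompat (μ k) f heig U eig hU1 hdiag
  have hcnt := count_le_eq_of_multiset_eq μ eig (μ k) hms
  rw [← hcnt] at hkey
  refine le_trans hkey ?_
  have hr : Nat.card {i : Fin n | μ i = μ k} = (Finset.univ.filter fun i => μ i = μ k).card := by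
    rw [Nat.card_eq_fintype_card]
    exact Fintype.card_subtype _
  rw [hr]
  have hsub : (Finset.univ.filter fun i => μ i ≤ μ k)
      ⊆ (Finset.univ.filter fun i => μ i < μ k) ∪ (Finset.univ.filter fun i => μ i = μ k) := by
    intro i hi
    rw [Finset.mem_filter] at hi
    rcases lt_or_eq_of_le hi.2 with h | h
    · exact Finset.mem_union_left _ (Finset.mem_filter.mpr ⟨Finset.mem_univ _, h⟩)
    · exact Finset.mem_union_right _ (Finset.mem_filter.mpr ⟨Finset.mem_univ _, h⟩)
  refine le_trans (Finset.card_le_card hsub) (le_trans (Finset.card_union_le _ _) ?_)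
  have hlt : (Finset.univ.filter fun i => μ i < μ k) ⊆ Finset.Iio k := by
    intro i hi
    rw [Finset.mem_filter] at hi
    rw [Finset.mem_Iio]
    by_contra hge
    push_neg at hge
    exact absurd (hmono hge) (not_le.mpr hi.2)
  have hcard := Finset.card_le_card hlt
  rw [Fin.card_Iio] at hcard
  omega
end

section
/- Let M be an n×n real symmetric matrix with induced signed graph Γ = (G,σ), and let λ_k be the k-th eigenvalue of M (eigenvalues listed in nondecreasing order with multiplicity). If f_k is an eigenvector with Mf_k = λ_k f_k having minimal support, then the number of strong nodal domains satisfies 𝔖(f_k) ≤ k. -/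
open Matrix Polynomial

/-! ### Auxiliary lemmas -/

section Aux

variable {V : Type*}

lemma aux_chain_transGen {R : V → V → Prop} :
    ∀ (t : List V) (x y : V), List.Chain R x t → t.getLast? = some y →
      Relation.TransGen R x y := by
  intro t
  induction t with
  | nil => intro x y _ h; simp at h
  | cons a t ih =>
    intro x y hc hl
    simp only [List.Chain, List.chain_cons] at hc
    cases t with
    | nil =>
      simp at hl
      subst hl
      exact .single hc.1
    | cons b t =>
      rw [List.getLast?_cons_cons] at hl
      exact .head hc.1 (ih a y hc.2 hl)

lemma aux_sconn_to_transGen {G : SimpleGraph V} {σ : V → V → ℝ} {f : V → ℝ} {x y : V}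
    (h : SConn G σ f x y) : Relation.TransGen (SWalkStep G σ f) x y := by
  obtain ⟨l, hlen, hc, hh, hl⟩ := h
  cases l with
  | nil => simp at hh
  | cons a t =>
    simp only [List.head?_cons, Option.some.injEq] at hh
    subst hh
    cases t with
    | nil => simp at hlen
    | cons b t =>
      rw [List.getLast?_cons_cons] at hl
      exact aux_chain_transGen (b :: t) a y hc hl

lemma aux_transGen_to_sconn {G : SimpleGraph V} {σ : V → V → ℝ} {f : V → ℝ} {x y : V}
    (h : Relation.TransGen (SWalkStep G σ f) x y) : SConn G σ f x y := by
  induction h with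
  | single r =>
    exact ⟨[x, _], by simp, List.isChain_pair.mpr r, by simp, by simp⟩
  | @tail b c _ r ih =>
    obtain ⟨l, h2, hc, hh, hl⟩ := ih
    have hne : l ≠ [] := by rintro rfl; simp at h2
    refine ⟨l ++ [c], ?_, ?_, ?_, ?_⟩
    · simp only [List.length_append, List.length_singleton]
      omega
    · refine List.IsChain.append hc (by simp) ?_
      intro u hu v hv
      simp only [List.head?_cons, Option.mem_def, Option.some.injEq] at hv
      rw [hl] at hu
      simp only [Option.mem_def, Option.some.injEq] at hu
      subst hu; subst hv
      exact r
    · rw [List.head?_append_of_ne_nil _ hne]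
      exact hh
    · simp [List.getLast?_concat]

lemma aux_transGen_symm {G : SimpleGraph V} {σ : V → V → ℝ} {f : V → ℝ}
    (hσ : ∀ a b, σ a b = σ b a) {x y : V}
    (h : Relation.TransGen (SWalkStep G σ f) x y) :
    Relation.TransGen (SWalkStep G σ f) y x := by
  have hs : Symmetric (SWalkStep G σ f) := by
    intro a b hab
    refine ⟨hab.1.symm, ?_⟩
    calc (0:ℝ) < f a * σ a b * f b := hab.2
    _ = f b * σ b a * f a := by rw [hσ a b]; ring
  induction h with
  | single r => exact .single (hs r)
  | tail _ r ih => exact .head (hs r) ih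

lemma aux_charpoly_conj {n : ℕ} (U N : Matrix (Fin n) (Fin n) ℝ)
    (hU : U * star U = 1) : (U * N * star U).charpoly = N.charpoly := by
  have hUW : (C : ℝ →+* ℝ[X]).mapMatrix U * (C : ℝ →+* ℝ[X]).mapMatrix (star U) = 1 := by
    rw [← _root_.map_mul, hU, _root_.map_one]
  have hc : (C : ℝ →+* ℝ[X]).mapMatrix U * Matrix.scalar (Fin n) (X : ℝ[X])
      = Matrix.scalar (Fin n) (X : ℝ[X]) * (C : ℝ →+* ℝ[X]).mapMatrix U :=
    (Matrix.scalar_commute (X : ℝ[X]) (fun r => Commute.all _ _) _).symm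
  have h2 : (C : ℝ →+* ℝ[X]).mapMatrix U * charmatrix N * (C : ℝ →+* ℝ[X]).mapMatrix (star U)
      = charmatrix (U * N * star U) := by
    rw [charmatrix, charmatrix, mul_sub, sub_mul]
    congr 1
    · rw [hc, mul_assoc, hUW, mul_one]
    · rw [← _root_.map_mul, ← _root_.map_mul]
  unfold Matrix.charpoly
  rw [← h2, det_mul, det_mul, mul_right_comm, ← det_mul, hUW, det_one, one_mul]

lemma aux_charpoly_eq_prod {n : ℕ} (M : Matrix (Fin n) (Fin n) ℝ)
    (hH : M.IsHermitian) : M.charpoly = ∏ i, (X - C (hH.eigenvalues i)) := by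
  have hd : (Matrix.diagonal (RCLike.ofReal ∘ hH.eigenvalues) : Matrix (Fin n) (Fin n) ℝ)
      = Matrix.diagonal hH.eigenvalues := by
    congr 1
  calc M.charpoly
      = ((hH.eigenvectorUnitary : Matrix (Fin n) (Fin n) ℝ) * Matrix.diagonal hH.eigenvalues *
          star (hH.eigenvectorUnitary : Matrix (Fin n) (Fin n) ℝ)).charpoly := by
        rw [← hd]; conv_lhs => rw [hH.spectral_theorem, Unitary.conjStarAlgAut_apply]
    _ = (Matrix.diagonal hH.eigenvalues).charpoly := by
        apply aux_charpoly_conj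
        exact Matrix.mem_unitaryGroup_iff.mp hH.eigenvectorUnitary.2
    _ = ∏ i, (X - C (hH.eigenvalues i)) := by
        rw [Matrix.charpoly_of_upperTriangular _ (Matrix.blockTriangular_diagonal _)]
        simp

lemma aux_repr {n : ℕ} (M : Matrix (Fin n) (Fin n) ℝ) (hH : M.IsHermitian) (g : Fin n → ℝ) :
    ∀ x, g x = ∑ i, ((⇑(hH.eigenvectorBasis i) : Fin n → ℝ) ⬝ᵥ g) * (hH.eigenvectorBasis i x) := by
  classical
  set U : Matrix (Fin n) (Fin n) ℝ := (hH.eigenvectorUnitary : Matrix (Fin n) (Fin n) ℝ)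
  have hU : U * star U = 1 := Matrix.mem_unitaryGroup_iff.mp hH.eigenvectorUnitary.2
  have h0 : g = U *ᵥ (star U *ᵥ g) := by rw [Matrix.mulVec_mulVec, hU, Matrix.one_mulVec]
  intro x
  conv_lhs => rw [h0]
  simp only [Matrix.mulVec, dotProduct, Matrix.star_apply, star_trivial]
  apply Finset.sum_congr rfl
  intro i _
  have hUi : ∀ y, U y i = hH.eigenvectorBasis i y := fun y => rfl
  rw [Finset.sum_mul, Finset.mul_sum]
  apply Finset.sum_congr rfl
  intro y _
  rw [hUi, hUi]
  have hw : (WithLp.equiv 2 (Fin n → ℝ)) (hH.eigenvectorBasis i) y = hH.eigenvectorBasis i y := rfl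
  ring

lemma aux_roots_multiset {n : ℕ} (M : Matrix (Fin n) (Fin n) ℝ) (μ e : Fin n → ℝ)
    (h1 : M.charpoly = ∏ i, (X - C (μ i))) (h2 : M.charpoly = ∏ i, (X - C (e i))) :
    (Finset.univ.val.map μ) = (Finset.univ.val.map e) := by
  have key : ∀ (w : Fin n → ℝ), (∏ i, (X - C (w i))).roots = Finset.univ.val.map w := by
    intro w
    rw [Finset.prod_eq_multiset_prod]
    have hmm : Multiset.map (fun i => X - C (w i)) Finset.univ.val
        = Multiset.map (fun a => X - C a) (Multiset.map w Finset.univ.val) := by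
      rw [Multiset.map_map]; rfl
    rw [hmm]
    exact roots_multiset_prod_X_sub_C _
  rw [← key μ, ← key e, ← h1, ← h2]

lemma aux_count_small {n : ℕ} (μ e : Fin n → ℝ) (k : Fin n) (hmono : Monotone μ)
    (hms : (Finset.univ.val.map μ) = (Finset.univ.val.map e)) :
    (Finset.univ.filter (fun i => e i < μ k)).card ≤ (k : ℕ) := by
  classical
  have h1 : (Finset.univ.filter (fun i => e i < μ k)).card
      = Multiset.countP (fun x => x < μ k) (Finset.univ.val.map e) := by
    rw [Multiset.countP_map]
    rfl
  rw [h1, ← hms, Multiset.countP_map]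
  have h2 : Multiset.card (Finset.univ.val.filter (fun i => μ i < μ k))
      = (Finset.univ.filter (fun i => μ i < μ k)).card := rfl
  rw [h2]
  calc (Finset.univ.filter (fun i => μ i < μ k)).card
      ≤ (Finset.Iio k).card := by
        apply Finset.card_le_card
        intro i hi
        simp only [Finset.mem_filter, Finset.mem_univ, true_and] at hi
        rw [Finset.mem_Iio]
        by_contra h
        exact absurd (hmono (le_of_not_gt h)) (not_le.mpr hi)
    _ = (k : ℕ) := Fin.card_Iio k

end Aux

/-- if f_k has minimal support then 𝔖(f_k) ≤ k
(1-based k; here k is 0-based). -/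
theorem stmt_11 (n : ℕ) (M : Matrix (Fin n) (Fin n) ℝ) (hM : M.IsSymm)
    (G : SimpleGraph (Fin n)) (σ : Fin n → Fin n → ℝ)
    (hσ : IsSignature G σ) (hcompat : Compatible M G σ)
    (μ : Fin n → ℝ) (hmono : Monotone μ)
    (hchar : M.charpoly = ∏ i, (Polynomial.X - Polynomial.C (μ i)))
    (k : Fin n) (f : Fin n → ℝ) (hf : f ≠ 0) (heig : M.mulVec f = μ k • f)
    (hmin : ∀ g : Fin n → ℝ, g ≠ 0 → M.mulVec g = μ k • g →
      {i | g i ≠ 0} ⊆ {i | f i ≠ 0} → {i | g i ≠ 0} = {i | f i ≠ 0}) :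
    numStrong G σ f ≤ (k : ℕ) + 1 := by
  classical
  by_contra hcount
  push_neg at hcount
  -- basic setup on nodal domains
  set S : Set (Set (Fin n)) := strongDomains G σ f with hSdef
  haveI : Fintype ↥S := Fintype.ofFinite _
  have hmS : (k : ℕ) + 2 ≤ Fintype.card ↥S := by
    have hh : numStrong G σ f = Fintype.card ↥S := by
      rw [numStrong, Nat.card_eq_fintype_card]
    omega
  set TG : Fin n → Fin n → Prop := Relation.TransGen (SWalkStep G σ f) with hTGdef
  have hmemcls : ∀ w x, x ∈ strongClass G σ f w ↔ f x ≠ 0 ∧ (x = w ∨ TG x w) := by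
    intro w x
    constructor
    · rintro ⟨hx, h | h⟩
      · exact ⟨hx, Or.inl h⟩
      · exact ⟨hx, Or.inr (aux_sconn_to_transGen h)⟩
    · rintro ⟨hx, h | h⟩
      · exact ⟨hx, Or.inl h⟩
      · exact ⟨hx, Or.inr (aux_transGen_to_sconn h)⟩
  have hclseq : ∀ w x, x ∈ strongClass G σ f w → strongClass G σ f x = strongClass G σ f w := by
    intro w x hx
    obtain ⟨hfx, hxw⟩ := (hmemcls w x).mp hx
    ext z
    rw [hmemcls, hmemcls]
    constructor
    · rintro ⟨hfz, hz | hz⟩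
      · subst hz; exact ⟨hfz, hxw⟩
      · rcases hxw with h | h
        · subst h; exact ⟨hfz, Or.inr hz⟩
        · exact ⟨hfz, Or.inr (hz.trans h)⟩
    · rintro ⟨hfz, hz | hz⟩
      · subst hz
        rcases hxw with h | h
        · exact ⟨hfz, Or.inl h.symm⟩
        · exact ⟨hfz, Or.inr (aux_transGen_symm hσ.1 h)⟩
      · rcases hxw with h | h
        · subst h; exact ⟨hfz, Or.inr hz⟩
        · exact ⟨hfz, Or.inr (hz.trans (aux_transGen_symm hσ.1 h))⟩
  have hmemown : ∀ x, f x ≠ 0 → x ∈ strongClass G σ f x :=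
    fun x hx => (hmemcls x x).mpr ⟨hx, Or.inl rfl⟩
  have hsupp0 : ∀ w x, x ∈ strongClass G σ f w → f x ≠ 0 :=
    fun w x hx => ((hmemcls w x).mp hx).1
  -- representatives
  have hrep : ∀ D : ↥S, ∃ w, f w ≠ 0 ∧ D.1 = strongClass G σ f w := fun D => D.2
  set rep : ↥S → Fin n := fun D => (hrep D).choose with hrepdef
  have hrep1 : ∀ D : ↥S, f (rep D) ≠ 0 := fun D => (hrep D).choose_spec.1
  have hrep2 : ∀ D : ↥S, D.1 = strongClass G σ f (rep D) := fun D => (hrep D).choose_spec.2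
  have hrepmem : ∀ D : ↥S, rep D ∈ D.1 := fun D => by
    rw [hrep2 D]; exact hmemown _ (hrep1 D)
  have hclsD : ∀ (D : ↥S) x, x ∈ D.1 → strongClass G σ f x = D.1 := by
    intro D x hx
    rw [hrep2 D] at hx ⊢
    exact hclseq _ _ hx
  have hDsupp : ∀ (D : ↥S) x, x ∈ D.1 → f x ≠ 0 := by
    intro D x hx
    rw [hrep2 D] at hx
    exact hsupp0 _ _ hx
  have hdisj : ∀ (D D' : ↥S) (x : Fin n), x ∈ D.1 → x ∈ D'.1 → D = D' := by
    intro D D' x hx hx'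
    apply Subtype.ext
    rw [← hclsD D x hx, ← hclsD D' x hx']
  -- the restricted functions
  set F : ↥S → Fin n → ℝ := fun D x => if x ∈ D.1 then f x else 0 with hFdef
  have hF0 : ∀ (D : ↥S) x, f x = 0 → F D x = 0 := by
    intro D x hx
    simp only [hFdef]
    split <;> simp [hx]
  have hFne : ∀ (D : ↥S) x, F D x ≠ 0 → x ∈ D.1 ∧ F D x = f x := by
    intro D x hx
    simp only [hFdef] at hx ⊢
    by_cases h : x ∈ D.1
    · exact ⟨h, if_pos h⟩
    · rw [if_neg h] at hx; exact absurd rfl hx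
  have hFmem : ∀ (D : ↥S) x, x ∈ D.1 → F D x = f x := by
    intro D x hx; simp only [hFdef]; exact if_pos hx
  have hdecomp : ∀ x, f x = ∑ D : ↥S, F D x := by
    intro x
    by_cases hx : f x = 0
    · rw [hx]
      symm
      apply Finset.sum_eq_zero
      intro D _
      exact hF0 D x hx
    · have hSmem : strongClass G σ f x ∈ S := ⟨x, hx, rfl⟩
      have hmem : x ∈ (⟨strongClass G σ f x, hSmem⟩ : ↥S).1 := hmemown x hx
      rw [Finset.sum_eq_single (⟨strongClass G σ f x, hSmem⟩ : ↥S)]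
      · exact (hFmem _ x hmem).symm
      · intro D _ hD
        simp only [hFdef]
        rw [if_neg]
        intro hxD
        exact hD (hdisj D _ x hxD hmem)
      · intro h
        exact absurd (Finset.mem_univ _) h
  -- cross terms are nonnegative
  have hcross : ∀ (D D' : ↥S), D ≠ D' → ∀ x y, 0 ≤ F D x * (M x y * F D' y) := by
    intro D D' hDD x y
    by_cases hx : F D x = 0
    · simp [hx]
    by_cases hy : F D' y = 0
    · simp [hy]
    obtain ⟨hxD, hFx⟩ := hFne D x hx
    obtain ⟨hyD, hFy⟩ := hFne D' y hy
    have hfx : f x ≠ 0 := by rw [← hFx]; exact hx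
    have hfy : f y ≠ 0 := by rw [← hFy]; exact hy
    by_cases hMxy : M x y = 0
    · simp [hMxy]
    have hxy : x ≠ y := by
      rintro rfl
      exact hDD (hdisj D D' x hxD hyD)
    have hadj : G.Adj x y := (hcompat.1 x y).mpr ⟨hxy, hMxy⟩
    have hσxy := hcompat.2 x y hadj
    have habs : (0:ℝ) < |M x y| := abs_pos.mpr hMxy
    have hMσ : M x y = -(σ x y) * |M x y| := by
      rw [hσxy]
      field_simp
    have hstep : ¬ (0 < f x * σ x y * f y) := by
      intro hpos
      have htg : TG x y := Relation.TransGen.single ⟨hadj, hpos⟩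
      have hxy' : x ∈ strongClass G σ f y := (hmemcls y x).mpr ⟨hfx, Or.inr htg⟩
      rw [hclsD D' y hyD] at hxy'
      exact hDD (hdisj D D' x hxD hxy')
    have hsne : f x * σ x y * f y ≠ 0 := by
      rcases hσ.2 x y hadj with h | h <;> rw [h] <;>
        simp [hfx, hfy, mul_ne_zero]
    have hneg : f x * σ x y * f y < 0 := lt_of_le_of_ne (not_lt.mp hstep) hsne
    have hcalc : F D x * (M x y * F D' y) = |M x y| * (-(f x * σ x y * f y)) := by
      rw [hFx, hFy]
      conv_lhs => rw [hMσ]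
      ring
    rw [hcalc]
    exact mul_nonneg habs.le (by linarith)
  -- the bilinear form on domains
  set Bq : ↥S → ↥S → ℝ := fun D D' => F D ⬝ᵥ (M *ᵥ F D') with hBqdef
  have hBexp : ∀ D D', Bq D D' = ∑ x, ∑ y, F D x * (M x y * F D' y) := by
    intro D D'
    simp [hBqdef, dotProduct, Matrix.mulVec, Finset.mul_sum]
  have hBnn : ∀ D D', D ≠ D' → 0 ≤ Bq D D' := by
    intro D D' h
    rw [hBexp]
    exact Finset.sum_nonneg fun x _ => Finset.sum_nonneg fun y _ => hcross D D' h x y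
  have hBsym : ∀ D D', Bq D D' = Bq D' D := by
    intro D D'
    rw [hBexp, hBexp, Finset.sum_comm]
    refine Finset.sum_congr rfl fun x _ => Finset.sum_congr rfl fun y _ => ?_
    rw [hM.apply]
    ring
  have hrow : ∀ D : ↥S, ∑ D', Bq D D' = μ k * (F D ⬝ᵥ F D) := by
    intro D
    have h1 : ∑ D', Bq D D' = F D ⬝ᵥ (M *ᵥ f) := by
      have hr : F D ⬝ᵥ (M *ᵥ f) = ∑ x, ∑ y, F D x * (M x y * f y) := by
        simp [dotProduct, Matrix.mulVec, Finset.mul_sum]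
      rw [hr]
      simp_rw [hBexp]
      rw [Finset.sum_comm]
      refine Finset.sum_congr rfl fun x _ => ?_
      rw [Finset.sum_comm]
      refine Finset.sum_congr rfl fun y _ => ?_
      rw [show (∑ D' : ↥S, F D x * (M x y * F D' y))
          = F D x * (M x y * ∑ D' : ↥S, F D' y) from by
        rw [Finset.mul_sum, Finset.mul_sum], ← hdecomp y]
    have h3 : F D ⬝ᵥ f = F D ⬝ᵥ F D := by
      simp only [dotProduct]
      refine Finset.sum_congr rfl fun x _ => ?_
      simp only [hFdef]
      split <;> simp
    rw [h1, heig, dotProduct_smul, h3]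
    rfl
  have hdiagz : ∀ D D' : ↥S, D ≠ D' → F D ⬝ᵥ F D' = 0 := by
    intro D D' h
    simp only [dotProduct]
    apply Finset.sum_eq_zero
    intro x _
    by_cases hx : F D x = 0
    · rw [hx, zero_mul]
    by_cases hy : F D' x = 0
    · rw [hy, mul_zero]
    exact absurd (hdisj D D' x (hFne D x hx).1 (hFne D' x hy).1) h
  -- spectral data
  have hH : M.IsHermitian := by
    rw [Matrix.IsHermitian, Matrix.conjTranspose_eq_transpose_of_trivial]
    exact hM
  set e : Fin n → ℝ := hH.eigenvalues with hedef
  set v : Fin n → Fin n → ℝ := fun i => ⇑(hH.eigenvectorBasis i) with hvdef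
  have hms : (Finset.univ.val.map μ) = (Finset.univ.val.map e) :=
    aux_roots_multiset M μ e hchar (aux_charpoly_eq_prod M hH)
  set J : Finset (Fin n) := Finset.univ.filter (fun i => e i < μ k) with hJdef
  have hJk : J.card ≤ (k : ℕ) := aux_count_small μ e k hmono hms
  -- a nonzero vector in the kernel of the constraints
  obtain ⟨x₀, hx₀⟩ := Function.ne_iff.mp hf
  have hx₀' : f x₀ ≠ 0 := hx₀
  set D₀ : ↥S := ⟨strongClass G σ f x₀, ⟨x₀, hx₀', rfl⟩⟩ with hD₀def
  set dotL : (Fin n → ℝ) → (Fin n → ℝ) →ₗ[ℝ] ℝ := fun u =>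
    { toFun := fun g => u ⬝ᵥ g
      map_add' := fun a b => dotProduct_add u a b
      map_smul' := fun r a => dotProduct_smul r u a } with hdotLdef
  set L : (↥S → ℝ) →ₗ[ℝ] (Fin n → ℝ) := Fintype.linearCombination ℝ F with hLdef
  set Φ : (↥S → ℝ) →ₗ[ℝ] (↥J → ℝ) × ℝ :=
    LinearMap.prod (LinearMap.pi fun j : ↥J => (dotL (v j.1)).comp L)
      (LinearMap.proj D₀) with hΦdef
  have hninj : ¬ Function.Injective Φ := by
    intro hinj
    have hle := LinearMap.finrank_le_finrank_of_injective hinj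
    rw [Module.finrank_pi, Module.finrank_prod, Module.finrank_pi, Module.finrank_self,
      Fintype.card_coe] at hle
    omega
  have hker : LinearMap.ker Φ ≠ ⊥ := by
    intro h
    exact hninj (LinearMap.ker_eq_bot.mp h)
  obtain ⟨c, hcmem, hcne⟩ := Submodule.exists_mem_ne_zero_of_ne_bot hker
  set g : Fin n → ℝ := ∑ D : ↥S, c D • F D with hgdef
  have hLc : L c = g := by
    rw [hLdef, hgdef]
    exact Fintype.linearCombination_apply ℝ F c
  have hΦc : Φ c = 0 := hcmem
  have h1 : ∀ j : ↥J, v j.1 ⬝ᵥ g = 0 := by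
    intro j
    have := congrFun (congrArg Prod.fst hΦc) j
    simpa [hΦdef, hLc, hdotLdef] using this
  have h2 : c D₀ = 0 := congrArg Prod.snd hΦc
  have hgx : ∀ x, g x = ∑ D : ↥S, c D * F D x := by
    intro x
    rw [hgdef]
    simp [Finset.sum_apply]
  have hgsupp : ∀ x, f x = 0 → g x = 0 := by
    intro x hx
    rw [hgx]
    apply Finset.sum_eq_zero
    intro D _
    rw [hF0 D x hx, mul_zero]
  have hgval : ∀ (D : ↥S) x, x ∈ D.1 → g x = c D * f x := by
    intro D x hx
    rw [hgx, Finset.sum_eq_single D]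
    · rw [hFmem D x hx]
    · intro D' _ hD'
      rw [(by simp only [hFdef]; rw [if_neg (fun hxD' => hD' (hdisj D' D x hxD' hx))] :
        F D' x = 0), mul_zero]
    · intro h; exact absurd (Finset.mem_univ _) h
  have hgne : g ≠ 0 := by
    obtain ⟨D, hD⟩ := Function.ne_iff.mp hcne
    intro h
    have := hgval D (rep D) (hrepmem D)
    rw [h] at this
    simp only [Pi.zero_apply] at this
    exact hD (by
      rcases mul_eq_zero.mp this.symm with h' | h'
      · exact h'
      · exact absurd h' (hrep1 D))
  -- eigen-decomposition of g
  set a : Fin n → ℝ := fun i => v i ⬝ᵥ g with hadef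
  have hrepr : ∀ x, g x = ∑ i, a i * v i x := aux_repr M hH g
  have hgfun : g = ∑ i, a i • v i := by
    funext x
    rw [hrepr x]
    simp [Finset.sum_apply]
  have hPars : g ⬝ᵥ g = ∑ i, a i * a i := by
    calc g ⬝ᵥ g = ∑ x, g x * g x := rfl
    _ = ∑ x, ∑ i, a i * v i x * g x := by
        refine Finset.sum_congr rfl fun x _ => ?_
        rw [hrepr x, Finset.sum_mul]
    _ = ∑ i, ∑ x, a i * v i x * g x := Finset.sum_comm
    _ = ∑ i, a i * a i := by
        refine Finset.sum_congr rfl fun i _ => ?_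
        have h4 : ∑ x, a i * v i x * g x = a i * ∑ x, v i x * g x := by
          rw [Finset.mul_sum]
          exact Finset.sum_congr rfl fun x _ => by ring
        have h5 : ∑ x, v i x * g x = a i := rfl
        rw [h4, h5]
  have hMv : ∀ i, M *ᵥ v i = e i • v i := fun i => hH.mulVec_eigenvectorBasis i
  have hMg : M *ᵥ g = ∑ i, a i • (e i • v i) := by
    rw [hgfun]
    rw [show M *ᵥ (∑ i, a i • v i) = ∑ i, a i • (M *ᵥ v i) by
      rw [← Matrix.mulVecLin_apply, map_sum]
      exact Finset.sum_congr rfl fun i _ => by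
        rw [_root_.map_smul, Matrix.mulVecLin_apply]]
    exact Finset.sum_congr rfl fun i _ => by rw [hMv i]
  have hgMg : g ⬝ᵥ (M *ᵥ g) = ∑ i, e i * (a i * a i) := by
    rw [hMg]
    have hw : ∀ x, (∑ i, a i • e i • v i) x = ∑ i, a i * (e i * v i x) := by
      intro x
      simp [Finset.sum_apply]
    calc g ⬝ᵥ (∑ i, a i • e i • v i) = ∑ x, g x * ∑ i, a i * (e i * v i x) := by
          refine Finset.sum_congr rfl fun x _ => ?_
          rw [hw x]
    _ = ∑ x, ∑ i, g x * (a i * (e i * v i x)) := by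
          refine Finset.sum_congr rfl fun x _ => Finset.mul_sum _ _ _
    _ = ∑ i, ∑ x, g x * (a i * (e i * v i x)) := Finset.sum_comm
    _ = ∑ i, e i * (a i * a i) := by
          refine Finset.sum_congr rfl fun i _ => ?_
          have h4 : ∑ x, g x * (a i * (e i * v i x)) = (a i * e i) * ∑ x, v i x * g x := by
            rw [Finset.mul_sum]
            exact Finset.sum_congr rfl fun x _ => by ring
          have h5 : ∑ x, v i x * g x = a i := rfl
          rw [h4, h5]
          ring
  -- upper bound from the domain decomposition
  have hgdot : ∀ w : Fin n → ℝ, g ⬝ᵥ w = ∑ D, c D * (F D ⬝ᵥ w) := by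
    intro w
    calc g ⬝ᵥ w = ∑ x, g x * w x := rfl
    _ = ∑ x, ∑ D, c D * F D x * w x := by
        refine Finset.sum_congr rfl fun x _ => ?_
        rw [hgx x, Finset.sum_mul]
    _ = ∑ D, ∑ x, c D * F D x * w x := Finset.sum_comm
    _ = ∑ D, c D * (F D ⬝ᵥ w) := by
        refine Finset.sum_congr rfl fun D _ => ?_
        simp only [dotProduct, Finset.mul_sum]
        exact Finset.sum_congr rfl fun x _ => by ring
  have hdotg : ∀ w : Fin n → ℝ, w ⬝ᵥ g = ∑ D, c D * (w ⬝ᵥ F D) := by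
    intro w
    calc w ⬝ᵥ g = ∑ x, w x * g x := rfl
    _ = ∑ x, ∑ D, w x * (c D * F D x) := by
        refine Finset.sum_congr rfl fun x _ => ?_
        rw [hgx x, Finset.mul_sum]
    _ = ∑ D, ∑ x, w x * (c D * F D x) := Finset.sum_comm
    _ = ∑ D, c D * (w ⬝ᵥ F D) := by
        refine Finset.sum_congr rfl fun D _ => ?_
        simp only [dotProduct, Finset.mul_sum]
        exact Finset.sum_congr rfl fun x _ => by ring
  have hMgd : ∀ x, (M *ᵥ g) x = ∑ D', c D' * (M *ᵥ F D') x := by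
    intro x
    calc (M *ᵥ g) x = ∑ y, M x y * g y := rfl
    _ = ∑ y, ∑ D', M x y * (c D' * F D' y) := by
        refine Finset.sum_congr rfl fun y _ => ?_
        rw [hgx y, Finset.mul_sum]
    _ = ∑ D', ∑ y, M x y * (c D' * F D' y) := Finset.sum_comm
    _ = ∑ D', c D' * (M *ᵥ F D') x := by
        refine Finset.sum_congr rfl fun D' _ => ?_
        have : (M *ᵥ F D') x = ∑ y, M x y * F D' y := rfl
        rw [this, Finset.mul_sum]
        exact Finset.sum_congr rfl fun y _ => by ring
  have hFMg : ∀ D : ↥S, F D ⬝ᵥ (M *ᵥ g) = ∑ D', c D' * Bq D D' := by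
    intro D
    calc F D ⬝ᵥ (M *ᵥ g) = ∑ x, F D x * (M *ᵥ g) x := rfl
    _ = ∑ x, ∑ D', c D' * (F D x * (M *ᵥ F D') x) := by
        refine Finset.sum_congr rfl fun x _ => ?_
        rw [hMgd x, Finset.mul_sum]
        exact Finset.sum_congr rfl fun D' _ => by ring
    _ = ∑ D', ∑ x, c D' * (F D x * (M *ᵥ F D') x) := Finset.sum_comm
    _ = ∑ D', c D' * Bq D D' := by
        refine Finset.sum_congr rfl fun D' _ => ?_
        rw [← Finset.mul_sum]
        rfl
  have hgMg2 : g ⬝ᵥ (M *ᵥ g) = ∑ D, ∑ D', c D * c D' * Bq D D' := by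
    rw [hgdot (M *ᵥ g)]
    refine Finset.sum_congr rfl fun D _ => ?_
    rw [hFMg D, Finset.mul_sum]
    exact Finset.sum_congr rfl fun D' _ => by ring
  have hB : g ⬝ᵥ g = ∑ D, c D * c D * (F D ⬝ᵥ F D) := by
    rw [hgdot g]
    refine Finset.sum_congr rfl fun D _ => ?_
    rw [hdotg (F D)]
    have hsingle : ∑ D' : ↥S, c D' * (F D ⬝ᵥ F D') = c D * (F D ⬝ᵥ F D) := by
      apply Finset.sum_eq_single
      · intro D' _ hD'
        rw [hdiagz D D' (fun hEq => hD' hEq.symm), mul_zero]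
      · intro h
        exact absurd (Finset.mem_univ _) h
    rw [hsingle]
    ring
  have hμgg : μ k * (g ⬝ᵥ g) = ∑ D, ∑ D', c D * c D * Bq D D' := by
    rw [hB, Finset.mul_sum]
    refine Finset.sum_congr rfl fun D _ => ?_
    rw [← Finset.mul_sum, hrow D]
    ring
  set T : ℝ := ∑ D, ∑ D', (c D * c D - c D * c D') * Bq D D' with hTdef
  have hsw : ∑ D, ∑ D', (c D' * c D' - c D' * c D) * Bq D D' = T := by
    rw [hTdef, Finset.sum_comm]
    refine Finset.sum_congr rfl fun D _ => Finset.sum_congr rfl fun D' _ => ?_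
    rw [hBsym D' D]
  have h2T : T + T = ∑ D, ∑ D', (c D - c D') * (c D - c D') * Bq D D' := by
    nth_rewrite 1 [← hsw]
    rw [hTdef, ← Finset.sum_add_distrib]
    refine Finset.sum_congr rfl fun D _ => ?_
    rw [← Finset.sum_add_distrib]
    refine Finset.sum_congr rfl fun D' _ => by ring
  have hTnn : 0 ≤ T + T := by
    rw [h2T]
    refine Finset.sum_nonneg fun D _ => Finset.sum_nonneg fun D' _ => ?_
    by_cases h : D = D'
    · subst h; simp
    · exact mul_nonneg (mul_self_nonneg _) (hBnn D D' h)
  have hupper : g ⬝ᵥ (M *ᵥ g) ≤ μ k * (g ⬝ᵥ g) := by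
    have hdiff : μ k * (g ⬝ᵥ g) - g ⬝ᵥ (M *ᵥ g) = T := by
      rw [hμgg, hgMg2, hTdef, ← Finset.sum_sub_distrib]
      refine Finset.sum_congr rfl fun D _ => ?_
      rw [← Finset.sum_sub_distrib]
      refine Finset.sum_congr rfl fun D' _ => by ring
    linarith
  -- lower bound from the eigen-decomposition
  have haJ : ∀ i, i ∈ J → a i = 0 := by
    intro i hi
    exact h1 ⟨i, hi⟩
  have heik : ∀ i, i ∉ J → μ k ≤ e i := by
    intro i hi
    rw [hJdef] at hi
    simp only [Finset.mem_filter, Finset.mem_univ, true_and] at hi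
    exact not_lt.mp hi
  have hlow : μ k * (g ⬝ᵥ g) ≤ g ⬝ᵥ (M *ᵥ g) := by
    rw [hgMg, hPars, Finset.mul_sum]
    refine Finset.sum_le_sum fun i _ => ?_
    by_cases hi : i ∈ J
    · rw [haJ i hi]; simp
    · exact mul_le_mul_of_nonneg_right (heik i hi) (mul_self_nonneg _)
  have heq : g ⬝ᵥ (M *ᵥ g) = μ k * (g ⬝ᵥ g) := le_antisymm hupper hlow
  -- g is an eigenvector
  have hzero : ∑ i, (e i - μ k) * (a i * a i) = 0 := by
    have h := heq
    rw [hgMg, hPars, Finset.mul_sum] at h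
    calc ∑ i, (e i - μ k) * (a i * a i)
        = ∑ i, (e i * (a i * a i) - μ k * (a i * a i)) :=
          Finset.sum_congr rfl fun i _ => by ring
      _ = ∑ i, e i * (a i * a i) - ∑ i, μ k * (a i * a i) := Finset.sum_sub_distrib _ _
      _ = 0 := by rw [h, sub_self]
  have hann : ∀ i ∈ Finset.univ, 0 ≤ (e i - μ k) * (a i * a i) := by
    intro i _
    by_cases hi : i ∈ J
    · rw [haJ i hi]; simp
    · exact mul_nonneg (by linarith [heik i hi]) (mul_self_nonneg _)
  have hterm := (Finset.sum_eq_zero_iff_of_nonneg hann).mp hzero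
  have haei : ∀ i, a i * e i = a i * μ k := by
    intro i
    rcases mul_eq_zero.mp (hterm i (Finset.mem_univ i)) with h | h
    · have : e i = μ k := by linarith [sub_eq_zero.mp h]
      rw [this]
    · rw [mul_self_eq_zero.mp h]
      ring
  have hMgeq : M.mulVec g = μ k • g := by
    funext x
    have hl : (M *ᵥ g) x = ∑ i, a i * (e i * v i x) := by
      rw [hMg]
      simp [Finset.sum_apply, mul_assoc]
    have hr : (μ k • g) x = ∑ i, a i * (μ k * v i x) := by
      have : (μ k • g) x = μ k * g x := rfl
      rw [this, hrepr x, Finset.mul_sum]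
      exact Finset.sum_congr rfl fun i _ => by ring
    rw [show M.mulVec g x = (M *ᵥ g) x from rfl, hl, hr]
    refine Finset.sum_congr rfl fun i _ => ?_
    linear_combination (v i x) * (haei i)
  -- contradiction with minimality of the support
  have hss : {i | g i ≠ 0} ⊆ {i | f i ≠ 0} := by
    intro x hx hfx
    exact hx (hgsupp x hfx)
  have hsupeq := hmin g hgne hMgeq hss
  have hx₀mem : x₀ ∈ D₀.1 := hmemown x₀ hx₀'
  have hgx₀ : g x₀ = 0 := by
    rw [hgval D₀ x₀ hx₀mem, h2, zero_mul]
  have hmem : x₀ ∈ {i | f i ≠ 0} := hx₀'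
  rw [← hsupeq] at hmem
  exact hmem hgx₀
end

section
/- Let M be a real symmetric matrix whose induced signed graph Γ = (G,σ) is connected, and let f be an eigenvector of M corresponding to an eigenvalue λ. Let D_1,…,D_m be the weak nodal domains of f and, for each i, define g_i(x) = f(x) if x ∈ D_i and g_i(x) = 0 otherwise. If g := Σ_{i=1}^m a_i g_i (with a_1,…,a_m ∈ ℝ) is an eigenvector of M corresponding to λ, then a_1 = a_2 = ⋯ = a_m. -/
open Matrix Polynomial

namespace Stmt12

variable {V : Type*}

lemma chainSign_nil (σ : V → V → ℝ) : chainSign σ [] = 1 := rfl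

lemma chainSign_single (σ : V → V → ℝ) (x : V) : chainSign σ [x] = 1 := rfl

lemma chainSign_cons_cons (σ : V → V → ℝ) (x y : V) (l : List V) :
    chainSign σ (x :: y :: l) = σ x y * chainSign σ (y :: l) := by
  simp [chainSign]

lemma chainSign_append (σ : V → V → ℝ) (l1 l2 : List V) (h : l1 ≠ []) :
    chainSign σ (l1 ++ l2) = chainSign σ l1 * chainSign σ (l1.getLast h :: l2) := by
  induction l1 with
  | nil => exact absurd rfl h
  | cons x l1' ih =>
    cases l1' with
    | nil => simp [chainSign_single]
    | cons y l1'' =>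
      have h' : (y :: l1'') ≠ [] := by simp
      have e1 : (x :: y :: l1'') ++ l2 = x :: y :: (l1'' ++ l2) := by simp
      rw [e1, chainSign_cons_cons]
      have e2 : (y :: (l1'' ++ l2)) = (y :: l1'') ++ l2 := by simp
      rw [e2, ih h', chainSign_cons_cons]
      have e3 : (x :: y :: l1'').getLast h = (y :: l1'').getLast h' := by
        simp [List.getLast_cons]
      rw [e3]; ring

lemma chainSign_pm (σ : V → V → ℝ) {l : List V}
    (h : l.Chain' (fun a b => σ a b = 1 ∨ σ a b = -1)) :
    chainSign σ l = 1 ∨ chainSign σ l = -1 := by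
  induction l with
  | nil => left; rfl
  | cons x l' ih =>
    cases l' with
    | nil => left; rfl
    | cons y l'' =>
      replace h := List.isChain_cons_cons.mp h
      rw [chainSign_cons_cons]
      rcases h.1 with h1 | h1 <;> rcases ih h.2 with h2 | h2 <;>
        simp [h1, h2]

lemma chainSign_cons (σ : V → V → ℝ) (x : V) {l : List V} (h : l ≠ []) :
    chainSign σ (x :: l) = σ x (l.head h) * chainSign σ l := by
  cases l with
  | nil => exact absurd rfl h
  | cons y l' => rw [chainSign_cons_cons]; rfl

lemma chainSign_reverse (σ : V → V → ℝ) (hs : ∀ x y, σ x y = σ y x) (l : List V) :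
    chainSign σ l.reverse = chainSign σ l := by
  induction l with
  | nil => rfl
  | cons x l' ih =>
    cases l' with
    | nil => rfl
    | cons y l'' =>
      have hne : (y :: l'').reverse ≠ [] := by simp
      rw [List.reverse_cons, chainSign_append σ _ _ hne, ih, chainSign_cons_cons]
      have e : (y :: l'').reverse.getLast hne = y := by
        rw [List.getLast_reverse]; rfl
      rw [e, chainSign_cons_cons, chainSign_single, hs x y]
      ring

/-- prefix sign: the chain sign of the first `k+1` entries. -/
noncomputable def pSign (σ : V → V → ℝ) (l : List V) (k : ℕ) : ℝ :=
  chainSign σ (l.take (k+1))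

lemma pSign_zero (σ : V → V → ℝ) (l : List V) : pSign σ l 0 = 1 := by
  cases l <;> rfl

lemma pSign_pm (σ : V → V → ℝ) {l : List V}
    (h : l.Chain' (fun a b => σ a b = 1 ∨ σ a b = -1)) (k : ℕ) :
    pSign σ l k = 1 ∨ pSign σ l k = -1 :=
  chainSign_pm σ (h.take _)

lemma pSign_succ (σ : V → V → ℝ) {l : List V} {k : ℕ} (h : k + 1 < l.length) :
    pSign σ l (k+1) = pSign σ l k * σ l[k] l[k+1] := by
  have hk : k < l.length := by omega
  have htake : l.take (k+2) = l.take (k+1) ++ [l[k+1]] := by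
    rw [← List.take_concat_get' l (k+1) h]
  have hne : l.take (k+1) ≠ [] := by
    have : (l.take (k+1)).length = k+1 := by
      rw [List.length_take]; omega
    intro hc; rw [hc] at this; simp at this
  have hlast : (l.take (k+1)).getLast hne = l[k] := by
    rw [List.getLast_eq_getElem]
    have hlen : (l.take (k+1)).length = k+1 := by rw [List.length_take]; omega
    have : (l.take (k+1))[(l.take (k+1)).length - 1]'(by omega) = (l.take (k+1))[k]'(by omega) := by
      congr 1; omega
    rw [this, List.getElem_take]
  show chainSign σ (l.take (k+2)) = _
  rw [htake, chainSign_append σ _ _ hne, hlast, chainSign_cons_cons, chainSign_single]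
  unfold pSign; ring

lemma chainSign_segment (σ : V → V → ℝ) {l : List V}
    (hpm : l.Chain' (fun a b => σ a b = 1 ∨ σ a b = -1))
    {i j : ℕ} (hij : i ≤ j) (hj : j < l.length) :
    chainSign σ ((l.drop i).take (j - i + 1)) = pSign σ l i * pSign σ l j := by
  induction j, hij using Nat.le_induction with
  | base =>
    have hi : i < l.length := hj
    have hdrop : l.drop i = l[i] :: l.drop (i+1) := List.drop_eq_getElem_cons hi
    have : i - i + 1 = 1 := by omega
    rw [this, hdrop]
    simp only [List.take_succ_cons, List.take_zero, chainSign_single]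
    rcases pSign_pm σ hpm i with h | h <;> rw [h] <;> norm_num
  | succ j hij ih =>
    have hjl : j < l.length := by omega
    have hdlen : (l.drop i).length = l.length - i := List.length_drop
    have h1 : j - i + 1 ≤ (l.drop i).length := by omega
    have h2 : j - i + 1 < (l.drop i).length := by omega
    have e0 : j + 1 - i + 1 = (j - i + 1) + 1 := by omega
    have egetj1 : (l.drop i)[j - i + 1]'h2 = l[j+1] := by
      rw [List.getElem_drop]
      congr 1; omega
    have htake : (l.drop i).take ((j - i + 1) + 1)
        = (l.drop i).take (j - i + 1) ++ [l[j+1]] := by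
      rw [← List.take_concat_get' (l.drop i) (j - i + 1) h2, egetj1]
    have hne : (l.drop i).take (j - i + 1) ≠ [] := by
      have : ((l.drop i).take (j - i + 1)).length = j - i + 1 := by
        rw [List.length_take]; omega
      intro hc; rw [hc] at this; simp at this
    have hlast : ((l.drop i).take (j - i + 1)).getLast hne = l[j] := by
      rw [List.getLast_eq_getElem]
      have hlen : ((l.drop i).take (j - i + 1)).length = j - i + 1 := by
        rw [List.length_take]; omega
      have hji : j - i < ((l.drop i).take (j-i+1)).length := by omega
      have e : ((l.drop i).take (j - i + 1))[((l.drop i).take (j-i+1)).length - 1]'(by omega)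
          = ((l.drop i).take (j - i + 1))[j - i]'hji := by congr 1; omega
      rw [e, List.getElem_take, List.getElem_drop]
      congr 1; omega
    rw [e0, htake, chainSign_append σ _ _ hne, hlast, ih hjl,
      chainSign_cons_cons, chainSign_single, pSign_succ σ hj]
    ring

end Stmt12
namespace Stmt12

variable {V : Type*} {G : SimpleGraph V} {σ : V → V → ℝ} {f : V → ℝ}

/-- all non-zero entries have the same ε-adjusted sign along the walk -/
def Good (σ : V → V → ℝ) (f : V → ℝ) (ε : ℝ) (l : List V) : Prop :=
  ∀ (k : ℕ) (hk : k < l.length), f (l[k]'hk) ≠ 0 → 0 < ε * f (l[k]'hk) * pSign σ l k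

lemma pm_chain (hσ : IsSignature G σ) {l : List V} (hadj : l.Chain' G.Adj) :
    l.Chain' (fun a b => σ a b = 1 ∨ σ a b = -1) :=
  hadj.imp (fun a b h => hσ.2 a b h)

lemma mk_WWalk (hσ : IsSignature G σ) {l : List V} (hlen : 2 ≤ l.length)
    (hadj : l.Chain' G.Adj) {ε : ℝ} (hε : ε = 1 ∨ ε = -1)
    (hgood : Good σ f ε l) : IsWWalk G σ f l := by
  refine ⟨hlen, hadj, ?_⟩
  intro i j hij hfi hfj _
  simp only [List.get_eq_getElem] at hfi hfj ⊢
  rw [chainSign_segment σ (pm_chain hσ hadj) (le_of_lt hij) j.isLt]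
  have A := hgood i.val i.isLt hfi
  have B := hgood j.val j.isLt hfj
  rcases hε with rfl | rfl <;> nlinarith [mul_pos A B]

lemma isWWalk_pair (hσ : IsSignature G σ) {l : List V} (hW : IsWWalk G σ f l) :
    ∀ d : ℕ, ∀ i j : ℕ, j - i ≤ d → ∀ (hi : i < l.length) (hj : j < l.length), i < j →
      f (l[i]'hi) ≠ 0 → f (l[j]'hj) ≠ 0 →
      0 < (f (l[i]'hi) * pSign σ l i) * (f (l[j]'hj) * pSign σ l j) := by
  have hpm := pm_chain hσ hW.2.1
  intro d
  induction d with
  | zero => intro i j hd hi hj hij; omega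
  | succ d ih =>
    intro i j hd hi hj hij hfi hfj
    by_cases hmid : ∃ k, i < k ∧ k < j ∧ ∃ hk : k < l.length, f (l[k]'hk) ≠ 0
    · obtain ⟨k, hik, hkj, hk, hfk⟩ := hmid
      have A := ih i k (by omega) hi hk hik hfi hfk
      have B := ih k j (by omega) hk hj hkj hfk hfj
      have hY : f (l[k]'hk) * pSign σ l k ≠ 0 := by
        intro h0; rw [h0, mul_zero] at A; exact lt_irrefl 0 A
      nlinarith [mul_pos A B, mul_self_pos.mpr hY]
    · have hcond := hW.2.2 ⟨i, hi⟩ ⟨j, hj⟩ (by simpa using hij)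
        (by simpa using hfi) (by simpa using hfj)
        (by
          intro k h1 h2
          by_contra hne
          exact hmid ⟨k.val, Fin.lt_def.mp h1, Fin.lt_def.mp h2, k.isLt, by simpa using hne⟩)
      simp only [List.get_eq_getElem] at hcond
      rw [chainSign_segment σ hpm (le_of_lt hij) hj] at hcond
      nlinarith [hcond]

lemma isWWalk_good (hσ : IsSignature G σ) {l : List V} (hW : IsWWalk G σ f l) :
    ∃ ε : ℝ, (ε = 1 ∨ ε = -1) ∧ Good σ f ε l := by
  have hpm := pm_chain hσ hW.2.1
  by_cases hex : ∃ (k : ℕ) (hk : k < l.length), f (l[k]'hk) ≠ 0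
  · obtain ⟨k0, hk0, hf0⟩ := hex
    have hX0 : f (l[k0]'hk0) * pSign σ l k0 ≠ 0 := by
      have := pSign_pm σ hpm k0
      rcases this with h | h <;> rw [h] <;> simpa using hf0
    refine ⟨if 0 < f (l[k0]'hk0) * pSign σ l k0 then (1:ℝ) else -1, by split_ifs <;> simp, ?_⟩
    intro k hk hfk
    have hprod : 0 < (f (l[k]'hk) * pSign σ l k) * (f (l[k0]'hk0) * pSign σ l k0) := by
      rcases lt_trichotomy k k0 with h | rfl | h
      · exact isWWalk_pair hσ hW (k0 - k) k k0 le_rfl hk hk0 h hfk hf0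
      · exact mul_self_pos.mpr hX0
      · have := isWWalk_pair hσ hW (k - k0) k0 k le_rfl hk0 hk h hf0 hfk
        nlinarith [this]
    split_ifs with hpos
    · nlinarith [hprod]
    · have hneg : f (l[k0]'hk0) * pSign σ l k0 < 0 := by
        rcases lt_trichotomy (f (l[k0]'hk0) * pSign σ l k0) 0 with h | h | h
        · exact h
        · exact absurd h hX0
        · exact absurd h hpos
      nlinarith [hprod]
  · refine ⟨1, Or.inl rfl, ?_⟩
    intro k hk hfk
    exact absurd ⟨k, hk, hfk⟩ hex

lemma head?_getElem {l : List V} {u : V} (h : l.head? = some u) :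
    ∃ hl : 0 < l.length, l[0]'hl = u := by
  cases l with
  | nil => simp at h
  | cons a t => simp at h; exact ⟨by simp, h⟩

lemma getLast?_getElem {l : List V} {v : V} (h : l.getLast? = some v) :
    ∃ hl : 0 < l.length, l[l.length - 1]'(by omega) = v := by
  have hne : l ≠ [] := by intro hc; rw [hc] at h; simp at h
  have := List.getLast?_eq_getLast hne
  rw [this] at h
  refine ⟨by cases l with | nil => exact absurd rfl hne | cons a t => simp, ?_⟩
  rw [← List.getLast_eq_getElem hne]
  exact Option.some_injective _ h

/-- structural constructor: a walk whose interior is all-zero, with positive total sign -/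
lemma wconn_cons_append (hσ : IsSignature G σ) {u v : V} (zs : List V)
    (hadj : (u :: (zs ++ [v])).Chain' G.Adj) (hz : ∀ z ∈ zs, f z = 0)
    (hu : f u ≠ 0) (hv : f v ≠ 0)
    (hsign : 0 < f u * chainSign σ (u :: (zs ++ [v])) * f v) :
    WConn G σ f u v := by
  have hlen : (u :: (zs ++ [v])).length = zs.length + 2 := by simp
  have hlen2 : 2 ≤ (u :: (zs ++ [v])).length := by omega
  have hlast : (u :: (zs ++ [v])).getLast? = some v := by
    have e : u :: (zs ++ [v]) = (u :: zs) ++ [v] := by simp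
    rw [e, List.getLast?_concat]
  refine ⟨u :: (zs ++ [v]), mk_WWalk hσ hlen2 hadj (ε := if 0 < f u then 1 else -1)
    (by split_ifs <;> simp) ?_, rfl, hlast⟩
  intro k hk hfk
  rcases Nat.eq_zero_or_pos k with rfl | hk0
  · rw [pSign_zero]
    simp only [List.getElem_cons_zero] at hfk ⊢
    split_ifs with h
    · nlinarith
    · rcases lt_trichotomy (f u) 0 with h' | h' | h'
      · nlinarith
      · exact absurd h' hfk
      · exact absurd h' h
  · obtain ⟨k', rfl⟩ : ∃ k', k = k' + 1 := ⟨k - 1, by omega⟩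
    have hk'2 : k' < zs.length + 1 := by
      rw [hlen] at hk; omega
    rcases lt_or_eq_of_le (Nat.lt_succ_iff.mp hk'2) with hk'lt | hk'eq
    · -- interior vertex: f = 0, contradiction
      exfalso
      apply hfk
      rw [List.getElem_cons_succ, List.getElem_append_left hk'lt]
      exact hz _ (List.getElem_mem hk'lt)
    · -- last vertex
      have hgl : (u :: (zs ++ [v]))[k'+1]'hk = v := by
        rw [List.getElem_cons_succ]
        exact List.getElem_concat_length hk'eq _
      have hps : pSign σ (u :: (zs ++ [v])) (k'+1) = chainSign σ (u :: (zs ++ [v])) := by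
        unfold pSign
        rw [List.take_of_length_le (by rw [hlen]; omega)]
      rw [hps]
      rw [hgl] at hfk ⊢
      split_ifs with h
      · nlinarith
      · rcases lt_trichotomy (f u) 0 with h' | h' | h'
        · nlinarith
        · exact absurd h' hu
        · exact absurd h' h

end Stmt12
namespace Stmt12

variable {V : Type*} {G : SimpleGraph V} {σ : V → V → ℝ} {f : V → ℝ}

lemma wconn_symm (hσ : IsSignature G σ) {x y : V} (h : WConn G σ f x y) :
    WConn G σ f y x := by
  obtain ⟨l, hW, hhead, hlast⟩ := h
  have hlen2 : 2 ≤ l.length := hW.1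
  have hadj : l.Chain' G.Adj := hW.2.1
  have hpm := pm_chain hσ hadj
  obtain ⟨ε, hε, hgood⟩ := isWWalk_good hσ hW
  have hCpm := chainSign_pm σ hpm
  refine ⟨l.reverse, ?_, by rw [List.head?_reverse]; exact hlast,
    by rw [List.getLast?_reverse]; exact hhead⟩
  refine mk_WWalk hσ (by simpa using hlen2)
    (List.isChain_reverse.mpr (hadj.imp fun a b hab => hab.symm))
    (ε := ε * chainSign σ l)
    (by rcases hε with rfl | rfl <;> rcases hCpm with h | h <;> simp [h]) ?_
  intro k hk hfk
  have hkl : k < l.length := by simpa using hk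
  have hidx : l.length - 1 - k < l.length := by omega
  have hrev : l.reverse[k]'hk = l[l.length - 1 - k]'hidx := List.getElem_reverse hk
  have hpsrev : pSign σ l.reverse k = pSign σ l (l.length - 1 - k) * chainSign σ l := by
    unfold pSign
    rw [List.take_reverse, chainSign_reverse σ hσ.1]
    have e2 : l.drop (l.length - (k+1)) =
        (l.drop (l.length - (k+1))).take ((l.length - 1) - (l.length - (k+1)) + 1) := by
      rw [List.take_of_length_le]
      rw [List.length_drop]; omega
    rw [e2, chainSign_segment σ hpm (by omega) (by omega)]
    have e4 : l.length - (k+1) = l.length - 1 - k := by omega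
    rw [e4]
    have e5 : l.take (l.length - 1 + 1) = l := List.take_of_length_le (by omega)
    unfold pSign
    rw [e5]
  rw [hpsrev]
  have hg := hgood (l.length - 1 - k) hidx (by rw [← hrev]; exact hfk)
  rw [hrev]
  rcases hCpm with hC | hC <;> rw [hC] <;> rcases hε with rfl | rfl <;> nlinarith [hg]

lemma wconn_trans (hσ : IsSignature G σ) {x y z : V} (hy : f y ≠ 0)
    (h1 : WConn G σ f x y) (h2 : WConn G σ f y z) : WConn G σ f x z := by
  obtain ⟨l1, hW1, hhead1, hlast1⟩ := h1
  obtain ⟨l2, hW2, hhead2, hlast2⟩ := h2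
  have hlen1 : 2 ≤ l1.length := hW1.1
  have hlen2 : 2 ≤ l2.length := hW2.1
  have hadj1 : l1.Chain' G.Adj := hW1.2.1
  have hadj2 : l2.Chain' G.Adj := hW2.2.1
  have hpm1 := pm_chain hσ hadj1
  obtain ⟨ε1, hε1, hgood1⟩ := isWWalk_good hσ hW1
  obtain ⟨ε2, hε2, hgood2⟩ := isWWalk_good hσ hW2
  obtain ⟨w, rest, rfl⟩ : ∃ w rest, l2 = w :: rest := by
    cases l2 with
    | nil => simp at hhead2
    | cons a t => exact ⟨a, t, rfl⟩
  have hwy : w = y := by simpa using hhead2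
  have hfw : f w ≠ 0 := by rw [hwy]; exact hy
  have hrestne : rest ≠ [] := by
    intro hc; rw [hc] at hlen2; simp at hlen2
  have hl1ne : l1 ≠ [] := by intro hc; rw [hc] at hlen1; simp at hlen1
  have hlastl1 : l1.getLast hl1ne = w := by
    have h' := List.getLast?_eq_getLast hl1ne
    rw [h'] at hlast1
    rw [hwy]
    exact Option.some_injective _ hlast1
  have hadjc : (l1 ++ rest).Chain' G.Adj := by
    refine List.IsChain.append hadj1 hadj2.tail ?_
    intro p hp q hq
    rw [List.getLast?_eq_getLast hl1ne] at hp
    have hpy : p = w := by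
      have := Option.mem_some_iff.mp hp
      rw [← this, hlastl1]
    cases rest with
    | nil => exact absurd rfl hrestne
    | cons b t =>
      have hqb : q = b := by
        have := Option.mem_some_iff.mp hq
        rw [← this]
      rw [hpy, hqb]
      exact (List.isChain_cons_cons.mp hadj2).1
  refine ⟨l1 ++ rest, ?_, ?_, ?_⟩
  · -- the W-walk property
    refine mk_WWalk hσ (by simp; omega) hadjc (ε := ε1) hε1 ?_
    intro k hk hfk
    have hkc : k < l1.length + rest.length := by simpa using hk
    by_cases hcase : k < l1.length
    · have hel : (l1 ++ rest)[k]'hk = l1[k]'hcase := List.getElem_append_left hcase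
      have hps : pSign σ (l1 ++ rest) k = pSign σ l1 k := by
        unfold pSign
        rw [List.take_append_of_le_length (by omega)]
      rw [hel] at hfk ⊢
      rw [hps]
      exact hgood1 k hcase hfk
    · push_neg at hcase
      obtain ⟨r, rfl⟩ : ∃ r, k = l1.length + r := ⟨k - l1.length, by omega⟩
      have hrlen : r < rest.length := by omega
      have hr1 : r + 1 < (w :: rest).length := by simp; omega
      have hel : (l1 ++ rest)[l1.length + r]'hk = (w :: rest)[r+1]'hr1 := by
        rw [List.getElem_append_right (by omega)]
        rw [List.getElem_cons_succ]
        congr 1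
        omega
      have hps : pSign σ (l1 ++ rest) (l1.length + r)
          = pSign σ l1 (l1.length - 1) * pSign σ (w :: rest) (r + 1) := by
        unfold pSign
        have e1 : l1.length + r + 1 = l1.length + (r+1) := by omega
        rw [e1, List.take_append, List.take_of_length_le (by omega : l1.length ≤ l1.length + (r+1)),
          Nat.add_sub_cancel_left, chainSign_append σ l1 _ hl1ne, hlastl1]
        have e3 : l1.take (l1.length - 1 + 1) = l1 := List.take_of_length_le (by omega)
        rw [e3]
        rw [show (w :: rest).take (r+1+1) = w :: rest.take (r+1) from rfl]
      rw [hps]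
      rw [hel] at hfk ⊢
      have hl1pos : l1.length - 1 < l1.length := by omega
      have hPy : l1[l1.length-1]'hl1pos = w := by
        rw [← List.getLast_eq_getElem hl1ne]; exact hlastl1
      have hP := hgood1 (l1.length - 1) hl1pos (by rw [hPy]; exact hfw)
      rw [hPy] at hP
      have hQ := hgood2 0 (by simp) (by simpa using hfw)
      rw [pSign_zero] at hQ
      simp only [List.getElem_cons_zero] at hQ
      have hR := hgood2 (r+1) hr1 hfk
      rcases hε1 with rfl | rfl <;> rcases hε2 with rfl | rfl <;>
        rcases pSign_pm σ hpm1 (l1.length - 1) with h1 | h1 <;>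
          rw [h1] at hP ⊢ <;> nlinarith [hP, hQ, hR, mul_pos hQ hR]
  · rw [List.head?_append]
    cases l1 with
    | nil => exact absurd rfl hl1ne
    | cons a t => simpa using hhead1
  · rw [List.getLast?_append]
    cases rest with
    | nil => exact absurd rfl hrestne
    | cons b t =>
      have : (w :: b :: t).getLast? = (b :: t).getLast? := List.getLast?_cons_cons
      rw [this] at hlast2
      rw [hlast2]; rfl

end Stmt12
namespace Stmt12

variable {V : Type*} {G : SimpleGraph V} {σ : V → V → ℝ} {f : V → ℝ}

/-- the reflexive closure of W-connectedness -/
def Rrel (G : SimpleGraph V) (σ : V → V → ℝ) (f : V → ℝ) (x y : V) : Prop :=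
  x = y ∨ WConn G σ f x y

lemma Rrel.symm' (hσ : IsSignature G σ) {x y : V} (h : Rrel G σ f x y) : Rrel G σ f y x := by
  rcases h with rfl | h
  · exact Or.inl rfl
  · exact Or.inr (wconn_symm hσ h)

lemma Rrel.trans' (hσ : IsSignature G σ) {x y z : V} (hy : f y ≠ 0)
    (h1 : Rrel G σ f x y) (h2 : Rrel G σ f y z) : Rrel G σ f x z := by
  rcases h1 with rfl | h1
  · exact h2
  · rcases h2 with rfl | h2
    · exact Or.inr h1
    · exact Or.inr (wconn_trans hσ hy h1 h2)

lemma mem_weakClass_self {w : V} (hw : f w ≠ 0) : w ∈ weakClass G σ f w :=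
  Or.inl ⟨hw, Or.inl rfl⟩

lemma rrel_of_mem_weakClass (hσ : IsSignature G σ) {w x : V} (hw : f w ≠ 0) (hx : f x ≠ 0)
    (h : x ∈ weakClass G σ f w) : Rrel G σ f x w := by
  rcases h with ⟨_, h⟩ | ⟨u, hu, hR, hxu⟩
  · exact h
  · exact Rrel.trans' hσ hu (Or.inr hxu) hR

lemma mem_weakClass_of_rrel {w x : V} (hx : f x ≠ 0) (h : Rrel G σ f x w) :
    x ∈ weakClass G σ f w :=
  Or.inl ⟨hx, h⟩

lemma weakClass_congr (hσ : IsSignature G σ) {w w' : V} (hw : f w ≠ 0) (hw' : f w' ≠ 0)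
    (h : Rrel G σ f w w') : weakClass G σ f w = weakClass G σ f w' := by
  have key : ∀ a b : V, f a ≠ 0 → f b ≠ 0 → Rrel G σ f a b →
      weakClass G σ f a ⊆ weakClass G σ f b := by
    intro a b ha hb hab x hx
    rcases hx with ⟨hxne, hR⟩ | ⟨u, hu, hR, hxu⟩
    · exact Or.inl ⟨hxne, Rrel.trans' hσ ha hR hab⟩
    · exact Or.inr ⟨u, hu, Rrel.trans' hσ ha hR hab, hxu⟩
  exact le_antisymm (key w w' hw hw' h) (key w' w hw' hw (Rrel.symm' hσ h))

end Stmt12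

namespace Stmt12

/-- invariant carried along a walk: either a support vertex whose coefficient is `c`,
or a zero vertex reachable from a `c`-coefficient support vertex through an all-zero chain. -/
def InvP {V : Type*} (G : SimpleGraph V) (f A : V → ℝ) (c : ℝ) (v : V) : Prop :=
  (f v ≠ 0 ∧ A v = c) ∨
  (f v = 0 ∧ ∃ (l : List V) (z1 x0 : V), l ≠ [] ∧ l.Chain' G.Adj ∧ (∀ z ∈ l, f z = 0) ∧
    l.head? = some z1 ∧ l.getLast? = some v ∧ G.Adj z1 x0 ∧ f x0 ≠ 0 ∧ A x0 = c)

end Stmt12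


open Stmt12 in
/-- discrete unique continuation through weak nodal domains. -/
theorem stmt_12 (n : ℕ) (M : Matrix (Fin n) (Fin n) ℝ) (hM : M.IsSymm)
    (G : SimpleGraph (Fin n)) (σ : Fin n → Fin n → ℝ)
    (hσ : IsSignature G σ) (hcompat : Compatible M G σ) (hconn : G.Connected)
    (lam : ℝ) (f : Fin n → ℝ) (hf : f ≠ 0) (heig : M.mulVec f = lam • f)
    (m : ℕ) (D : Fin m → Set (Fin n))
    (hDmem : ∀ i, D i ∈ weakDomains G σ f)
    (hDall : ∀ W ∈ weakDomains G σ f, ∃ i, D i = W)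
    (hDinj : Function.Injective D)
    (a : Fin m → ℝ)
    (g : Fin n → ℝ) (hg : g = fun x => ∑ i, a i * (D i).indicator f x)
    (hgne : g ≠ 0) (hgeig : M.mulVec g = lam • g) :
    ∀ i j, a i = a j := by
  classical
  have hσsymm : ∀ x y, σ x y = σ y x := hσ.1
  -- matrix sign facts
  have hMadj : ∀ x y, G.Adj x y → M x y = -σ x y * |M x y| := by
    intro x y h
    have hMne : M x y ≠ 0 := ((hcompat.1 x y).mp h).2
    rw [hcompat.2 x y h]
    have : |M x y| ≠ 0 := abs_ne_zero.mpr hMne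
    field_simp
  have hM0 : ∀ x y : Fin n, x ≠ y → ¬ G.Adj x y → M x y = 0 := by
    intro x y hne hnadj
    by_contra hMne
    exact hnadj ((hcompat.1 x y).mpr ⟨hne, hMne⟩)
  -- eigen equations
  have heigf : ∀ x, ∑ y, M x y * f y = lam * f x := by
    intro x
    have := congrFun heig x
    simpa [Matrix.mulVec, dotProduct] using this
  have heigg : ∀ x, ∑ y, M x y * g y = lam * g x := by
    intro x
    have := congrFun hgeig x
    simpa [Matrix.mulVec, dotProduct] using this
  -- nonemptiness
  obtain ⟨x0, hx0⟩ : ∃ x, f x ≠ 0 := by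
    by_contra h
    push_neg at h
    exact hf (funext fun x => h x)
  have hFinm : Nonempty (Fin m) := by
    obtain ⟨i, _⟩ := hDall _ ⟨x0, hx0, rfl⟩
    exact ⟨i⟩
  -- the index function
  have hex : ∀ x : Fin n, ∃ i : Fin m, f x ≠ 0 → D i = weakClass G σ f x := by
    intro x
    by_cases hx : f x = 0
    · exact ⟨Classical.arbitrary _, fun h => absurd hx h⟩
    · obtain ⟨i, hi⟩ := hDall _ ⟨x, hx, rfl⟩
      exact ⟨i, fun _ => hi⟩
  choose idx hidx using hex
  have hUniq : ∀ (x : Fin n) (i : Fin m), f x ≠ 0 → x ∈ D i → i = idx x := by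
    intro x i hx hxi
    obtain ⟨wi, hwi, hDi⟩ := hDmem i
    rw [hDi] at hxi
    have hR := rrel_of_mem_weakClass hσ hwi hx hxi
    have hcls : weakClass G σ f x = weakClass G σ f wi := weakClass_congr hσ hx hwi hR
    apply hDinj
    rw [hidx x hx, hDi, hcls]
  have hmemidx : ∀ x, f x ≠ 0 → x ∈ D (idx x) := by
    intro x hx
    rw [hidx x hx]
    exact mem_weakClass_self hx
  have hCidx : ∀ u v : Fin n, f u ≠ 0 → f v ≠ 0 → WConn G σ f u v → idx u = idx v := by
    intro u v hu hv hwc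
    have hmem : u ∈ D (idx v) := by
      rw [hidx v hv]
      exact mem_weakClass_of_rrel hu (Or.inr hwc)
    exact (hUniq u (idx v) hu hmem).symm
  -- g formulas
  have hgzero : ∀ x, f x = 0 → g x = 0 := by
    intro x hx
    rw [hg]
    apply Finset.sum_eq_zero
    intro i _
    by_cases hxD : x ∈ D i
    · rw [Set.indicator_of_mem hxD, hx, mul_zero]
    · rw [Set.indicator_of_notMem hxD, mul_zero]
  have hgsupp : ∀ x, f x ≠ 0 → g x = a (idx x) * f x := by
    intro x hx
    rw [hg]
    show (∑ i, a i * (D i).indicator f x) = _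
    rw [Finset.sum_eq_single (idx x)]
    · rw [Set.indicator_of_mem (hmemidx x hx)]
    · intro i _ hne
      by_cases hxD : x ∈ D i
      · exact absurd (hUniq x i hx hxD) hne
      · rw [Set.indicator_of_notMem hxD, mul_zero]
    · intro h
      exact absurd (Finset.mem_univ _) h
  -- maximal coefficient
  obtain ⟨i0, hi0⟩ := Finite.exists_max a
  
  -- ===== anchor lemma at zero vertices =====
  have hanchor : ∀ z : Fin n, f z = 0 → ∀ x1 : Fin n, G.Adj z x1 → f x1 ≠ 0 →
      (∀ y, G.Adj z y → f y ≠ 0 → a (idx y) = a (idx x1)) ∧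
      (∀ s : ℝ, s ≠ 0 → ∃ u, G.Adj z u ∧ f u ≠ 0 ∧ 0 < σ z u * f u * s) := by
    intro z hfz x1 hzx1 hfx1
    set P := Finset.univ.filter (fun y => G.Adj z y ∧ f y ≠ 0 ∧ 0 < σ z y * f y) with hP
    set N := Finset.univ.filter (fun y => G.Adj z y ∧ f y ≠ 0 ∧ σ z y * f y < 0) with hN
    have hmemP : ∀ y, y ∈ P ↔ (G.Adj z y ∧ f y ≠ 0 ∧ 0 < σ z y * f y) := by
      intro y; rw [hP]; simp
    have hmemN : ∀ y, y ∈ N ↔ (G.Adj z y ∧ f y ≠ 0 ∧ σ z y * f y < 0) := by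
      intro y; rw [hN]; simp
    have hPN : ∀ y, G.Adj z y → f y ≠ 0 → y ∈ P ∨ y ∈ N := by
      intro y hadj hfy
      rcases lt_trichotomy (σ z y * f y) 0 with h | h | h
      · exact Or.inr ((hmemN y).mpr ⟨hadj, hfy, h⟩)
      · exfalso
        rcases hσ.2 z y hadj with hh | hh <;> rw [hh] at h <;>
          [skip; skip] <;> simp at h <;> exact hfy h
      · exact Or.inl ((hmemP y).mpr ⟨hadj, hfy, h⟩)
    have hdisj : Disjoint P N := by
      rw [Finset.disjoint_left]
      intro y hyP hyN
      have h1 := ((hmemP y).mp hyP).2.2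
      have h2 := ((hmemN y).mp hyN).2.2
      linarith
    have hsplit : ∀ F : Fin n → ℝ, (∀ y, f y = 0 → F y = 0) →
        ∑ y, M z y * F y = (∑ y ∈ P, M z y * F y) + (∑ y ∈ N, M z y * F y) := by
      intro F hF
      rw [← Finset.sum_union hdisj]
      symm
      apply Finset.sum_subset (Finset.subset_univ _)
      intro y _ hy
      by_cases hadj : G.Adj z y
      · by_cases hfy : f y = 0
        · rw [hF y hfy, mul_zero]
        · rcases hPN y hadj hfy with h | h
          · exact absurd (Finset.mem_union_left _ h) hy
          · exact absurd (Finset.mem_union_right _ h) hy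
      · by_cases hyz : y = z
        · subst hyz; rw [hF y hfz, mul_zero]
        · rw [hM0 z y (fun hh => hyz hh.symm) hadj, zero_mul]
    have htermP : ∀ y ∈ P, M z y * f y < 0 := by
      intro y hy
      obtain ⟨hadj, hfy, hsgn⟩ := (hmemP y).mp hy
      have habs : 0 < |M z y| := abs_pos.mpr ((hcompat.1 z y).mp hadj).2
      rw [hMadj z y hadj]
      nlinarith
    have htermN : ∀ y ∈ N, 0 < M z y * f y := by
      intro y hy
      obtain ⟨hadj, hfy, hsgn⟩ := (hmemN y).mp hy
      have habs : 0 < |M z y| := abs_pos.mpr ((hcompat.1 z y).mp hadj).2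
      rw [hMadj z y hadj]
      nlinarith
    have hsum1 : (∑ y ∈ P, M z y * f y) + (∑ y ∈ N, M z y * f y) = 0 := by
      rw [← hsplit f (fun y h => h), heigf z, hfz, mul_zero]
    have hx1PN := hPN x1 hzx1 hfx1
    have hPne : P.Nonempty := by
      by_contra hPe
      rw [Finset.not_nonempty_iff_eq_empty] at hPe
      have hx1N : x1 ∈ N := by
        rcases hx1PN with h | h
        · rw [hPe] at h; simp at h
        · exact h
      have hSN : 0 < ∑ y ∈ N, M z y * f y := Finset.sum_pos htermN ⟨x1, hx1N⟩
      rw [hPe] at hsum1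
      simp at hsum1
      linarith
    have hNne : N.Nonempty := by
      by_contra hNe
      rw [Finset.not_nonempty_iff_eq_empty] at hNe
      have hx1P : x1 ∈ P := by
        rcases hx1PN with h | h
        · exact h
        · rw [hNe] at h; simp at h
      have hSP : (∑ y ∈ P, M z y * f y) < 0 := Finset.sum_neg htermP ⟨x1, hx1P⟩
      rw [hNe] at hsum1
      simp at hsum1
      linarith
    have hwalk3 : ∀ y y' : Fin n, G.Adj z y → G.Adj z y' → f y ≠ 0 → f y' ≠ 0 →
        0 < (σ z y * f y) * (σ z y' * f y') → idx y = idx y' := by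
      intro y y' h1 h2 hf1 hf2 hpos
      apply hCidx y y' hf1 hf2
      apply wconn_cons_append hσ (zs := [z])
      · exact List.IsChain.cons_cons h1.symm (List.isChain_pair.mpr h2)
      · intro zz hzz
        simp at hzz
        subst hzz
        exact hfz
      · exact hf1
      · exact hf2
      · show 0 < f y * chainSign σ [y, z, y'] * f y'
        rw [chainSign_cons_cons, chainSign_cons_cons, chainSign_single, hσsymm y z]
        nlinarith
    obtain ⟨yP, hyP⟩ := hPne
    obtain ⟨yN, hyN⟩ := hNne
    have hsameP : ∀ y ∈ P, idx y = idx yP := by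
      intro y hy
      obtain ⟨ha1, hb1, hc1⟩ := (hmemP y).mp hy
      obtain ⟨ha2, hb2, hc2⟩ := (hmemP yP).mp hyP
      exact hwalk3 y yP ha1 ha2 hb1 hb2 (mul_pos hc1 hc2)
    have hsameN : ∀ y ∈ N, idx y = idx yN := by
      intro y hy
      obtain ⟨ha1, hb1, hc1⟩ := (hmemN y).mp hy
      obtain ⟨ha2, hb2, hc2⟩ := (hmemN yN).mp hyN
      exact hwalk3 y yN ha1 ha2 hb1 hb2 (mul_pos_of_neg_of_neg hc1 hc2)
    have hsum2 : (∑ y ∈ P, M z y * g y) + (∑ y ∈ N, M z y * g y) = 0 := by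
      rw [← hsplit g hgzero, heigg z, hgzero z hfz, mul_zero]
    have hgP : (∑ y ∈ P, M z y * g y) = a (idx yP) * ∑ y ∈ P, M z y * f y := by
      rw [Finset.mul_sum]
      apply Finset.sum_congr rfl
      intro y hy
      obtain ⟨_, hb1, _⟩ := (hmemP y).mp hy
      rw [hgsupp y hb1, hsameP y hy]
      ring
    have hgN : (∑ y ∈ N, M z y * g y) = a (idx yN) * ∑ y ∈ N, M z y * f y := by
      rw [Finset.mul_sum]
      apply Finset.sum_congr rfl
      intro y hy
      obtain ⟨_, hb1, _⟩ := (hmemN y).mp hy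
      rw [hgsupp y hb1, hsameN y hy]
      ring
    have hSPneg : (∑ y ∈ P, M z y * f y) < 0 := Finset.sum_neg htermP ⟨yP, hyP⟩
    have hab : a (idx yP) = a (idx yN) := by
      have e2 : a (idx yP) * (∑ y ∈ P, M z y * f y)
          + a (idx yN) * (∑ y ∈ N, M z y * f y) = 0 := by
        rw [← hgP, ← hgN]; exact hsum2
      have e4 : a (idx yN) * ((∑ y ∈ P, M z y * f y) + (∑ y ∈ N, M z y * f y)) = 0 := by
        rw [hsum1, mul_zero]
      have e3 : (a (idx yP) - a (idx yN)) * (∑ y ∈ P, M z y * f y) = 0 := by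
        linear_combination e2 - e4
      rcases mul_eq_zero.mp e3 with h | h
      · linarith
      · exact absurd h (ne_of_lt hSPneg)
    constructor
    · intro y hadj hfy
      have key : ∀ u, u ∈ P ∨ u ∈ N → a (idx u) = a (idx yP) := by
        intro u hu
        rcases hu with h | h
        · rw [hsameP u h]
        · rw [hsameN u h, ← hab]
      rw [key y (hPN y hadj hfy), key x1 hx1PN]
    · intro s hs
      rcases lt_or_gt_of_ne hs with hneg | hpos
      · obtain ⟨ha1, hb1, hc1⟩ := (hmemN yN).mp hyN
        exact ⟨yN, ha1, hb1, mul_pos_of_neg_of_neg hc1 hneg⟩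
      · obtain ⟨ha1, hb1, hc1⟩ := (hmemP yP).mp hyP
        exact ⟨yP, ha1, hb1, mul_pos hc1 hpos⟩
  
  -- ===== supp-to-supp propagation =====
  have hE1 : ∀ u v : Fin n, f u ≠ 0 → a (idx u) = a i0 → G.Adj u v → f v ≠ 0 →
      a (idx v) = a i0 := by
    intro u v hfu hac huv hfv
    have hσuv := hσ.2 u v huv
    rcases lt_trichotomy (f u * (σ u v * f v)) 0 with hneg | hzero | hpos
    · -- negative side: use the eigen-equation sum at u
      have h1 : (∑ y, M u y * (g y - a i0 * f y)) = 0 := by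
        have e : (∑ y, M u y * (g y - a i0 * f y))
            = (∑ y, M u y * g y) - a i0 * (∑ y, M u y * f y) := by
          rw [Finset.mul_sum, ← Finset.sum_sub_distrib]
          exact Finset.sum_congr rfl fun y _ => by ring
        rw [e, heigg u, heigf u, hgsupp u hfu, hac]
        ring
      have hzeroSum : (∑ y, -(M u y * (g y - a i0 * f y) * f u)) = 0 := by
        have e : (∑ y, -(M u y * (g y - a i0 * f y) * f u))
            = -((∑ y, M u y * (g y - a i0 * f y)) * f u) := by
          rw [Finset.sum_mul, ← Finset.sum_neg_distrib]
        rw [e, h1]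
        ring
      have hnonneg : ∀ y ∈ Finset.univ, (0:ℝ) ≤ -(M u y * (g y - a i0 * f y) * f u) := by
        intro y _
        by_cases hyu : y = u
        · subst hyu
          have h0 : g y - a i0 * f y = 0 := by rw [hgsupp y hfu, hac]; ring
          rw [h0]
          simp
        · by_cases hadj : G.Adj u y
          · by_cases hfy : f y = 0
            · rw [hgzero y hfy, hfy]
              simp
            · have hMne : M u y ≠ 0 := ((hcompat.1 u y).mp hadj).2
              have habs : 0 < |M u y| := abs_pos.mpr hMne
              have hσpm := hσ.2 u y hadj
              rw [hgsupp y hfy]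
              rcases lt_trichotomy (f u * (σ u y * f y)) 0 with hs | hs | hs
              · have hle : a (idx y) ≤ a i0 := hi0 (idx y)
                rw [hMadj u y hadj]
                nlinarith [mul_nonneg (mul_nonneg (sub_nonneg.mpr hle) habs.le)
                  (neg_nonneg.mpr hs.le)]
              · exfalso
                rcases mul_eq_zero.mp hs with h | h
                · exact hfu h
                · rcases mul_eq_zero.mp h with h' | h'
                  · rcases hσpm with hh | hh <;> rw [hh] at h' <;> norm_num at h'
                  · exact hfy h'
              · have hwc : WConn G σ f u y := by
                  apply wconn_cons_append hσ (zs := ([] : List (Fin n)))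
                  · show List.Chain' G.Adj [u, y]
                    exact List.isChain_pair.mpr hadj
                  · intro zz hzz; simp at hzz
                  · exact hfu
                  · exact hfy
                  · show 0 < f u * chainSign σ [u, y] * f y
                    rw [chainSign_cons_cons, chainSign_single]
                    nlinarith
                have hidxeq : idx u = idx y := hCidx u y hfu hfy hwc
                rw [← hidxeq, hac]
                have h0 : a i0 * f y - a i0 * f y = 0 := by ring
                rw [h0]
                simp
          · rw [hM0 u y (fun hh => hyu hh.symm) hadj]
            simp
      have hkey := (Finset.sum_eq_zero_iff_of_nonneg hnonneg).mp hzeroSum v (Finset.mem_univ v)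
      -- extract the conclusion at v
      have hMne : M u v ≠ 0 := ((hcompat.1 u v).mp huv).2
      have habs : 0 < |M u v| := abs_pos.mpr hMne
      by_contra hne
      have hlt : a (idx v) < a i0 := lt_of_le_of_ne (hi0 (idx v)) hne
      rw [hgsupp v hfv, hMadj u v huv] at hkey
      nlinarith [hkey, mul_pos (mul_pos (sub_pos.mpr hlt) habs) (neg_pos.mpr hneg)]
    · exfalso
      rcases mul_eq_zero.mp hzero with h | h
      · exact hfu h
      · rcases mul_eq_zero.mp h with h' | h'
        · rcases hσuv with hh | hh <;> rw [hh] at h' <;> norm_num at h'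
        · exact hfv h'
    · -- positive side: same class
      have hwc : WConn G σ f u v := by
        apply wconn_cons_append hσ (zs := ([] : List (Fin n)))
        · show List.Chain' G.Adj [u, v]
          exact List.isChain_pair.mpr huv
        · intro zz hzz; simp at hzz
        · exact hfu
        · exact hfv
        · show 0 < f u * chainSign σ [u, v] * f v
          rw [chainSign_cons_cons, chainSign_single]
          nlinarith
      rw [← hCidx u v hfu hfv hwc, hac]
  
  -- ===== invariant propagation along edges =====
  have hstep : ∀ u v : Fin n, InvP G f (fun x => a (idx x)) (a i0) u → G.Adj u v →
      InvP G f (fun x => a (idx x)) (a i0) v := by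
    intro u v hu huv
    rcases hu with ⟨hfu, hau⟩ | ⟨hfu0, l, z1, x1, hlne, hlch, hlz, hlh, hll, hzadj, hx1, hax1⟩
    · by_cases hfv : f v = 0
      · right
        refine ⟨hfv, [v], v, u, by simp, List.isChain_singleton v, ?_, rfl, by simp, huv.symm,
          hfu, hau⟩
        intro zz hzz
        simp at hzz
        subst hzz
        exact hfv
      · left
        exact ⟨hfv, hE1 u v hfu hau huv hfv⟩
    · by_cases hfv : f v = 0
      · right
        refine ⟨hfv, l ++ [v], z1, x1, by simp, ?_, ?_, ?_, List.getLast?_concat, hzadj,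
          hx1, hax1⟩
        · refine List.IsChain.append hlch (List.isChain_singleton v) ?_
          intro p hp q hq
          rw [hll] at hp
          have hpu : p = u := (Option.mem_some_iff.mp hp).symm
          have hqv : q = v := (Option.mem_some_iff.mp hq).symm
          rw [hpu, hqv]
          exact huv
        · intro zz hzz
          rcases List.mem_append.mp hzz with h | h
          · exact hlz zz h
          · simp at h
            subst h
            exact hfv
        · rw [List.head?_append, hlh]
          rfl
      · -- crossing back into the support through a zero chain
        left
        refine ⟨hfv, ?_⟩
        show a (idx v) = a i0
        obtain ⟨hl0, h0e⟩ := head?_getElem hlh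
        have hz1mem : z1 ∈ l := h0e ▸ List.getElem_mem hl0
        have hfz1 : f z1 = 0 := hlz _ hz1mem
        obtain ⟨hAll, hSides⟩ := hanchor z1 hfz1 x1 hzadj hx1
        have hlvne : l ++ [v] ≠ [] := by simp
        have hchainlv : (l ++ [v]).Chain' G.Adj := by
          refine List.IsChain.append hlch (List.isChain_singleton v) ?_
          intro p hp q hq
          rw [hll] at hp
          have hpu : p = u := (Option.mem_some_iff.mp hp).symm
          have hqv : q = v := (Option.mem_some_iff.mp hq).symm
          rw [hpu, hqv]
          exact huv
        have hheadlv : (l ++ [v]).head hlvne = z1 := by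
          have h1 : (l ++ [v]).head? = some z1 := by rw [List.head?_append, hlh]; rfl
          rw [List.head?_eq_head hlvne] at h1
          exact Option.some_injective _ h1
        have hK := chainSign_pm σ (pm_chain hσ hchainlv)
        have hKne : chainSign σ (l ++ [v]) * f v ≠ 0 := by
          rcases hK with h | h <;> rw [h] <;> simpa using hfv
        obtain ⟨u', hu'adj, hfu', hu'sign⟩ := hSides (chainSign σ (l ++ [v]) * f v) hKne
        have hwalkadj : (u' :: (l ++ [v])).Chain' G.Adj := by
          refine List.isChain_cons.mpr ?_
          refine ⟨?_, hchainlv⟩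
          intro q hq
          rw [List.head?_eq_head hlvne] at hq
          have hq' : (l ++ [v]).head hlvne = q := Option.mem_some_iff.mp hq
          rw [← hq', hheadlv]
          exact hu'adj.symm
        have hsign : 0 < f u' * chainSign σ (u' :: (l ++ [v])) * f v := by
          rw [chainSign_cons σ u' hlvne, hheadlv, hσsymm u' z1]
          nlinarith [hu'sign]
        have hwc : WConn G σ f u' v :=
          wconn_cons_append hσ (zs := l) hwalkadj hlz hfu' hfv hsign
        rw [← hCidx u' v hfu' hfv hwc, hAll u' hu'adj hfu']
        exact hax1
  -- ===== walk induction =====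
  have hreach : ∀ (u v : Fin n) (p : G.Walk u v),
      InvP G f (fun x => a (idx x)) (a i0) u → InvP G f (fun x => a (idx x)) (a i0) v := by
    intro u v p
    induction p with
    | nil => exact id
    | cons h p ih => exact fun hu => ih (hstep _ _ hu h)
  obtain ⟨w0, hw0, hD0⟩ := hDmem i0
  have hidxw0 : idx w0 = i0 :=
    (hUniq w0 i0 hw0 (by rw [hD0]; exact mem_weakClass_self hw0)).symm
  have hconst : ∀ x : Fin n, f x ≠ 0 → a (idx x) = a i0 := by
    intro x hx
    have hw0inv : InvP G f (fun x => a (idx x)) (a i0) w0 :=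
      Or.inl ⟨hw0, by show a (idx w0) = a i0; rw [hidxw0]⟩
    obtain ⟨p⟩ := hconn.preconnected w0 x
    rcases hreach w0 x p hw0inv with ⟨_, h⟩ | ⟨h0, _⟩
    · exact h
    · exact absurd h0 hx
  -- ===== conclusion =====
  intro i j
  obtain ⟨wi, hwi, hDi⟩ := hDmem i
  obtain ⟨wj, hwj, hDj⟩ := hDmem j
  have hii : idx wi = i := (hUniq wi i hwi (by rw [hDi]; exact mem_weakClass_self hwi)).symm
  have hjj : idx wj = j := (hUniq wj j hwj (by rw [hDj]; exact mem_weakClass_self hwj)).symm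
  rw [← hii, ← hjj, hconst wi hwi, hconst wj hwj]
end

section
/- Let A be an n×n acyclic real symmetric matrix with induced signed graph Γ = (T,σ), T = (V,E). Let λ be an eigenvalue of A with multiplicity r and eigenvector f : V → ℝ. Let F := {x ∈ V : f(x) = 0 and f(y) = 0 for all y ∼ x}, and let r̃ be the multiplicity of λ as an eigenvalue of the matrix Ã obtained from A by deleting all rows and columns with indices in F. Then r ≥ r̃ and r̃ = e_0 − 2z + c + |F|, where z = |{x ∈ V : f(x) = 0}|, e_0 = |{{x,y} ∈ E : f(x) = 0 or f(y) = 0}|, and c is the number of connected components of T. -/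
open Matrix Polynomial

open Matrix

lemma nd15_acyclic_mono {V : Type*} {G H : SimpleGraph V} (hle : H ≤ G) (hG : G.IsAcyclic) :
    H.IsAcyclic := fun _ c hc => hG (c.mapLe hle) (hc.mapLe hle)

lemma nd15_walk_const {V : Type*} {G : SimpleGraph V} {β : Sort*} (ν : V → β)
    (h : ∀ a b, G.Adj a b → ν a = ν b) {u v : V} (p : G.Walk u v) : ν u = ν v := by
  induction p with
  | nil => rfl
  | cons h' _ ih => exact (h _ _ h').trans ih

lemma nd15_reach_of_walk_const {V : Type*} {G : SimpleGraph V} {β : Sort*} (ν : V → β)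
    (h : ∀ a b, G.Adj a b → ν a = ν b) {u v : V} (hr : G.Reachable u v) : ν u = ν v := by
  obtain ⟨p⟩ := hr; exact nd15_walk_const ν h p

lemma nd15_reach_split {V : Type*} {G : SimpleGraph V} (u v : V) {x y : V}
    (p : G.Walk x y) :
    (G.deleteEdges {s(u,v)}).Reachable x y ∨
      ((G.deleteEdges {s(u,v)}).Reachable x u ∧ (G.deleteEdges {s(u,v)}).Reachable v y) ∨
      ((G.deleteEdges {s(u,v)}).Reachable x v ∧ (G.deleteEdges {s(u,v)}).Reachable u y) := by
  set G' := G.deleteEdges {s(u,v)} with hG'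
  induction p with
  | nil => exact Or.inl (SimpleGraph.Reachable.refl _)
  | @cons a b c h p ih =>
    by_cases he : s(a, b) = s(u, v)
    · rw [Sym2.eq_iff] at he
      rcases he with ⟨rfl, rfl⟩ | ⟨rfl, rfl⟩
      · rcases ih with h1 | ⟨h1, h2⟩ | ⟨h1, h2⟩
        · exact Or.inr (Or.inl ⟨SimpleGraph.Reachable.refl _, h1⟩)
        · exact Or.inl (h1.symm.trans h2)
        · exact Or.inl h2
      · rcases ih with h1 | ⟨h1, h2⟩ | ⟨h1, h2⟩
        · exact Or.inr (Or.inr ⟨SimpleGraph.Reachable.refl _, h1⟩)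
        · exact Or.inl h2
        · exact Or.inl (h1.symm.trans h2)
    · have hadj : G'.Adj a b := by
        rw [hG', SimpleGraph.deleteEdges_adj]
        exact ⟨h, by simpa using he⟩
      have hr : G'.Reachable a b := hadj.reachable
      rcases ih with h1 | ⟨h1, h2⟩ | ⟨h1, h2⟩
      · exact Or.inl (hr.trans h1)
      · exact Or.inr (Or.inl ⟨hr.trans h1, h2⟩)
      · exact Or.inr (Or.inr ⟨hr.trans h1, h2⟩)

lemma nd15_card_cc_deleteEdge {n : ℕ} {G : SimpleGraph (Fin n)} {u v : Fin n}
    (h : G.Adj u v) (hb : ¬ (G.deleteEdges {s(u,v)}).Reachable u v) :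
    Nat.card (G.deleteEdges {s(u,v)}).ConnectedComponent
      = Nat.card G.ConnectedComponent + 1 := by
  classical
  set G' := G.deleteEdges {s(u,v)} with hG'
  have hle : G' ≤ G := SimpleGraph.deleteEdges_le _
  let φ : G'.ConnectedComponent → G.ConnectedComponent :=
    SimpleGraph.ConnectedComponent.lift (fun w => G.connectedComponentMk w)
      (fun a b p _ => nd15_walk_const _
        (fun a b hab => SimpleGraph.ConnectedComponent.sound (hle hab).reachable) p)
  have hφ : ∀ w, φ (G'.connectedComponentMk w) = G.connectedComponentMk w := fun _ => rfl
  let ψ : G'.ConnectedComponent → G.ConnectedComponent ⊕ Unit := fun c =>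
    if c = G'.connectedComponentMk v then Sum.inr () else Sum.inl (φ c)
  have hbij : Function.Bijective ψ := by
    constructor
    · intro c1 c2 hc
      by_cases h1 : c1 = G'.connectedComponentMk v
      · by_cases h2 : c2 = G'.connectedComponentMk v
        · exact h1.trans h2.symm
        · simp only [ψ, if_pos h1, if_neg h2] at hc; exact absurd hc (by simp)
      · by_cases h2 : c2 = G'.connectedComponentMk v
        · simp only [ψ, if_neg h1, if_pos h2] at hc; exact absurd hc (by simp)
        · simp only [ψ, if_neg h1, if_neg h2, Sum.inl.injEq] at hc
          revert h1 h2 hc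
          refine SimpleGraph.ConnectedComponent.ind₂ (fun x y h1 h2 hc => ?_) c1 c2
          rw [hφ, hφ] at hc
          have hxy := SimpleGraph.ConnectedComponent.exact hc
          obtain ⟨p⟩ := hxy
          rcases nd15_reach_split u v p with hr | ⟨hr1, hr2⟩ | ⟨hr1, hr2⟩
          · exact SimpleGraph.ConnectedComponent.sound hr
          · exact absurd (SimpleGraph.ConnectedComponent.sound hr2.symm) h2
          · exact absurd (SimpleGraph.ConnectedComponent.sound hr1) h1
    · intro b
      rcases b with c | _
      · refine SimpleGraph.ConnectedComponent.ind (fun x => ?_) c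
        by_cases hx : G'.connectedComponentMk x = G'.connectedComponentMk v
        · refine ⟨G'.connectedComponentMk u, ?_⟩
          have hne : G'.connectedComponentMk u ≠ G'.connectedComponentMk v := by
            intro hc; exact hb (SimpleGraph.ConnectedComponent.exact hc)
          simp only [ψ, if_neg hne, hφ]
          have : G.connectedComponentMk u = G.connectedComponentMk x := by
            have h1 : G.connectedComponentMk u = G.connectedComponentMk v :=
              SimpleGraph.ConnectedComponent.sound h.reachable
            have h2 : G.connectedComponentMk x = G.connectedComponentMk v :=
              SimpleGraph.ConnectedComponent.sound
                ((SimpleGraph.ConnectedComponent.exact hx).mono hle)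
            rw [h1, h2]
          rw [this]
        · exact ⟨G'.connectedComponentMk x, by simp only [ψ, if_neg hx, hφ]⟩
      · exact ⟨G'.connectedComponentMk v, by simp [ψ]⟩
  have := Nat.card_eq_of_bijective ψ hbij
  rw [this, Nat.card_sum]
  simp

lemma nd15_forest_formula {n : ℕ} (G : SimpleGraph (Fin n)) (hG : G.IsAcyclic) :
    Nat.card G.edgeSet + Nat.card G.ConnectedComponent = n := by
  classical
  generalize hk : Nat.card G.edgeSet = k
  induction k generalizing G with
  | zero =>
    have hempty : G.edgeSet = ∅ := by
      by_contra hne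
      obtain ⟨e, he⟩ := Set.nonempty_iff_ne_empty.2 hne
      have : Nat.card G.edgeSet ≠ 0 := by
        rw [Nat.card_ne_zero]
        exact ⟨⟨⟨e, he⟩⟩, Set.toFinite _⟩
      exact this hk
    have hnoadj : ∀ a b : Fin n, ¬ G.Adj a b := by
      intro a b hab
      have : s(a,b) ∈ G.edgeSet := hab
      rw [hempty] at this; exact this
    have hbij : Function.Bijective (G.connectedComponentMk) := by
      constructor
      · intro a b hab
        exact nd15_reach_of_walk_const id (fun a b h => absurd h (hnoadj a b))
          (SimpleGraph.ConnectedComponent.exact hab)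
      · exact Quot.mk_surjective
    rw [zero_add, ← Nat.card_eq_of_bijective _ hbij]
    simp
  | succ k ih =>
    have hne : G.edgeSet.Nonempty := by
      rw [Set.nonempty_iff_ne_empty]
      intro hc
      rw [hc] at hk
      simp at hk
    obtain ⟨e, he⟩ := hne
    induction e using Sym2.ind with
    | _ u v =>
    have hadj : G.Adj u v := he
    have hb : ¬ (G.deleteEdges {s(u,v)}).Reachable u v := by
      have := (SimpleGraph.isAcyclic_iff_forall_edge_isBridge.mp hG) he
      rw [SimpleGraph.isBridge_iff] at this
      exact this
    have hedge : (G.deleteEdges {s(u,v)}).edgeSet = G.edgeSet \ {s(u,v)} :=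
      SimpleGraph.edgeSet_deleteEdges _
    have hcard : Nat.card (G.deleteEdges {s(u,v)}).edgeSet = k := by
      rw [hedge, Nat.card_coe_set_eq, Set.ncard_diff_singleton_of_mem he,
        ← Nat.card_coe_set_eq, hk]
      omega
    have hind := ih (G.deleteEdges {s(u,v)})
      (nd15_acyclic_mono (SimpleGraph.deleteEdges_le _) hG) hcard
    rw [nd15_card_cc_deleteEdge hadj hb] at hind
    omega


lemma nd15_wronskian {n : ℕ} {G : SimpleGraph (Fin n)} (hG : G.IsAcyclic)
    {B : Matrix (Fin n) (Fin n) ℝ} (hsym : ∀ x y, B x y = B y x)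
    (hadj : ∀ x y, x ≠ y → B x y ≠ 0 → G.Adj x y)
    (hadj' : ∀ x y, G.Adj x y → B x y ≠ 0)
    {f g : Fin n → ℝ}
    (hf : ∀ x, ∑ y, B x y * f y = 0)
    (hg : ∀ x, f x * ∑ y, B x y * g y = 0)
    {u v : Fin n} (huv : G.Adj u v) : f u * g v = f v * g u := by
  classical
  set G' := G.deleteEdges {s(u,v)} with hG'
  have hbridge : ¬ G'.Reachable u v := by
    have := (SimpleGraph.isAcyclic_iff_forall_edge_isBridge.mp hG) ((SimpleGraph.mem_edgeSet G).mpr huv)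
    rw [SimpleGraph.isBridge_iff] at this
    exact this
  set Q : Finset (Fin n) := Finset.univ.filter (fun x => G'.Reachable x v) with hQ
  have hvQ : v ∈ Q := by
    simp only [hQ, Finset.mem_filter, Finset.mem_univ, true_and]
    exact SimpleGraph.Reachable.refl _
  have huQ : u ∉ Q := by simp only [hQ, Finset.mem_filter]; rintro ⟨-, h⟩; exact hbridge h
  set w : Fin n → Fin n → ℝ := fun x y => B x y * (f x * g y - g x * f y) with hw
  have hanti : ∀ x y, w y x = - w x y := by
    intro x y
    simp only [hw, hsym y x]; ring
  -- total sum is zero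
  have htot : ∑ x ∈ Q, ∑ y, w x y = 0 := by
    refine Finset.sum_eq_zero (fun x _ => ?_)
    have : ∑ y, w x y = f x * (∑ y, B x y * g y) - (∑ y, B x y * f y) * g x := by
      rw [Finset.mul_sum, Finset.sum_mul, ← Finset.sum_sub_distrib]
      refine Finset.sum_congr rfl (fun y _ => ?_)
      ring
    rw [this, hf, hg]; ring
  -- the diagonal block sums to zero
  have hQQ : ∑ x ∈ Q, ∑ y ∈ Q, w x y = 0 := by
    have h1 : ∑ x ∈ Q, ∑ y ∈ Q, w x y = ∑ x ∈ Q, ∑ y ∈ Q, w y x := Finset.sum_comm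
    have h2 : ∑ x ∈ Q, ∑ y ∈ Q, w y x = - ∑ x ∈ Q, ∑ y ∈ Q, w x y := by
      rw [← Finset.sum_neg_distrib]
      refine Finset.sum_congr rfl (fun x _ => ?_)
      rw [← Finset.sum_neg_distrib]
      exact Finset.sum_congr rfl (fun y _ => hanti x y)
    have := h1.trans h2
    linarith
  -- crossing terms vanish except (v, u)
  have hcross0 : ∀ x ∈ Q, ∀ y ∈ Qᶜ, (x ≠ v ∨ y ≠ u) → w x y = 0 := by
    intro x hx y hy hne
    rw [Finset.mem_compl] at hy
    by_cases hB : B x y = 0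
    · simp [hw, hB]
    · have hxy : x ≠ y := by rintro rfl; exact hy hx
      have hadjxy : G.Adj x y := hadj x y hxy hB
      have hxv : G'.Reachable x v := by
        simpa [hQ] using hx
      by_cases he : s(x, y) = s(u, v)
      · rw [Sym2.eq_iff] at he
        rcases he with ⟨rfl, rfl⟩ | ⟨rfl, rfl⟩
        · exact absurd hvQ hy
        · rcases hne with h | h
          · exact absurd rfl h
          · exact absurd rfl h
      · have : G'.Adj x y := by
          rw [hG', SimpleGraph.deleteEdges_adj]
          exact ⟨hadjxy, by simpa using he⟩
        have : y ∈ Q := by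
          simp only [hQ, Finset.mem_filter, Finset.mem_univ, true_and]
          exact this.symm.reachable.trans hxv
        exact absurd this hy
  have hinner : ∑ y ∈ Qᶜ, w v y = w v u :=
    Finset.sum_eq_single_of_mem u (Finset.mem_compl.mpr huQ)
      (fun y hy hyu => hcross0 v hvQ y hy (Or.inr hyu))
  have hcross : ∑ x ∈ Q, ∑ y ∈ Qᶜ, w x y = w v u :=
    (Finset.sum_eq_single_of_mem v hvQ (fun x hx hxv =>
      Finset.sum_eq_zero (fun y hy => hcross0 x hx y hy (Or.inl hxv)))).trans hinner
  have hsplit : ∑ x ∈ Q, ∑ y, w x y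
      = (∑ x ∈ Q, ∑ y ∈ Q, w x y) + ∑ x ∈ Q, ∑ y ∈ Qᶜ, w x y := by
    rw [← Finset.sum_add_distrib]
    refine Finset.sum_congr rfl (fun x _ => ?_)
    exact (Finset.sum_add_sum_compl Q (w x)).symm
  have hwvu : w v u = 0 := by
    rw [hsplit, hQQ, hcross] at htot
    linarith
  have hBvu : B v u ≠ 0 := hadj' v u huv.symm
  have : f v * g u - g v * f u = 0 := by
    rcases mul_eq_zero.mp hwvu with h | h
    · exact absurd h hBvu
    · exact h
  nlinarith [this]


def nd15R {V : Type*} (Gs : SimpleGraph V) (D : Set Gs.ConnectedComponent) : SimpleGraph V where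
  Adj a b := Gs.Adj a b ∧ Gs.connectedComponentMk a ∈ D
  symm := by
    constructor
    rintro a b ⟨h, hd⟩
    refine ⟨h.symm, ?_⟩
    rwa [← SimpleGraph.ConnectedComponent.connectedComponentMk_eq_of_adj h]
  loopless := ⟨fun a h => Gs.loopless.irrefl a h.1⟩

lemma nd15R_le {V : Type*} (Gs : SimpleGraph V) (D : Set Gs.ConnectedComponent) :
    nd15R Gs D ≤ Gs := fun _ _ h => h.1

lemma nd15R_reach {V : Type*} {Gs : SimpleGraph V} {D : Set Gs.ConnectedComponent} {u v : V}
    (p : Gs.Walk u v) (hu : Gs.connectedComponentMk u ∈ D) : (nd15R Gs D).Reachable u v := by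
  induction p with
  | nil => exact SimpleGraph.Reachable.refl _
  | @cons a b c h p ih =>
    have hab : Gs.connectedComponentMk b ∈ D := by
      rwa [← SimpleGraph.ConnectedComponent.connectedComponentMk_eq_of_adj h]
    exact (SimpleGraph.Adj.reachable (⟨h, hu⟩ : (nd15R Gs D).Adj a b)).trans (ih hab)

lemma nd15_card_cc_nd15R {V : Type*} [Finite V] (Gs : SimpleGraph V)
    (D : Set Gs.ConnectedComponent) :
    Nat.card (nd15R Gs D).ConnectedComponent
      = Nat.card D + Nat.card {v : V // Gs.connectedComponentMk v ∉ D} := by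
  classical
  set H := nd15R Gs D with hH
  let ν₀ : V → ↥D ⊕ {v : V // Gs.connectedComponentMk v ∉ D} := fun v =>
    if h : Gs.connectedComponentMk v ∈ D then Sum.inl ⟨_, h⟩ else Sum.inr ⟨v, h⟩
  have hconst : ∀ a b, H.Adj a b → ν₀ a = ν₀ b := by
    intro a b hab
    have h1 : Gs.connectedComponentMk a ∈ D := hab.2
    have h2 : Gs.connectedComponentMk b ∈ D := by
      rwa [← SimpleGraph.ConnectedComponent.connectedComponentMk_eq_of_adj hab.1]
    simp only [ν₀, dif_pos h1, dif_pos h2]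
    exact congrArg _ (Subtype.ext
      (SimpleGraph.ConnectedComponent.connectedComponentMk_eq_of_adj hab.1))
  let ν : H.ConnectedComponent → ↥D ⊕ {v : V // Gs.connectedComponentMk v ∉ D} :=
    SimpleGraph.ConnectedComponent.lift ν₀ (fun a b p _ => nd15_walk_const ν₀ hconst p)
  have hν : ∀ v, ν (H.connectedComponentMk v) = ν₀ v := fun _ => rfl
  have hbij : Function.Bijective ν := by
    constructor
    · refine SimpleGraph.ConnectedComponent.ind₂ (fun x y hxy => ?_)
      rw [hν, hν] at hxy
      by_cases hx : Gs.connectedComponentMk x ∈ D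
      · by_cases hy : Gs.connectedComponentMk y ∈ D
        · simp only [ν₀, dif_pos hx, dif_pos hy, Sum.inl.injEq, Subtype.mk.injEq] at hxy
          obtain ⟨p⟩ := SimpleGraph.ConnectedComponent.exact hxy
          exact SimpleGraph.ConnectedComponent.sound (nd15R_reach p hx)
        · simp only [ν₀, dif_pos hx, dif_neg hy] at hxy
          cases hxy
      · by_cases hy : Gs.connectedComponentMk y ∈ D
        · simp only [ν₀, dif_neg hx, dif_pos hy] at hxy
          cases hxy
        · simp only [ν₀, dif_neg hx, dif_neg hy, Sum.inr.injEq, Subtype.mk.injEq] at hxy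
          rw [hxy]
    · rintro (⟨d, hd⟩ | ⟨v, hv⟩)
      · revert hd
        refine SimpleGraph.ConnectedComponent.ind (fun w hd => ?_) d
        refine ⟨H.connectedComponentMk w, ?_⟩
        rw [hν]
        simp only [ν₀, dif_pos hd]
      · refine ⟨H.connectedComponentMk v, ?_⟩
        rw [hν]
        simp only [ν₀, dif_neg hv]
  rw [Nat.card_eq_of_bijective ν hbij, Nat.card_sum]

lemma nd15_isolated_reach {V : Type*} {H : SimpleGraph V} {a c : V}
    (h : ∀ b, ¬ H.Adj a b) (hr : H.Reachable a c) : a = c := by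
  obtain ⟨p⟩ := hr
  cases p with
  | nil => rfl
  | cons h' _ => exact absurd h' (h _)

lemma nd15_two_mul_card_image_le {α β : Type*} [DecidableEq β] (s : Finset α) (F : α → β)
    (h : ∀ b ∈ s.image F, 2 ≤ (s.filter (fun a => F a = b)).card) :
    2 * (s.image F).card ≤ s.card := by
  rw [Finset.card_eq_sum_card_image F s]
  calc 2 * (s.image F).card = ∑ _b ∈ s.image F, 2 := by
        rw [Finset.sum_const, smul_eq_mul, mul_comm]
  _ ≤ ∑ b ∈ s.image F, (s.filter (fun a => F a = b)).card := Finset.sum_le_sum h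

lemma nd15_card_split {α : Type*} [Finite α] (s : Set α) (p : α → Prop) :
    Nat.card {e : α | e ∈ s ∧ p e} + Nat.card {e : α | e ∈ s ∧ ¬ p e} = Nat.card s := by
  have h1 : {e : α | e ∈ s ∧ p e} ∪ {e : α | e ∈ s ∧ ¬ p e} = s := by
    ext e; by_cases hp : p e <;> simp [hp]
  have hd : Disjoint {e : α | e ∈ s ∧ p e} {e : α | e ∈ s ∧ ¬ p e} := by
    rw [Set.disjoint_left]; rintro e ⟨-, hp⟩ ⟨-, hnp⟩; exact hnp hp
  have h2 : Nat.card s = ({e : α | e ∈ s ∧ p e} ∪ {e : α | e ∈ s ∧ ¬ p e}).ncard := by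
    rw [h1, Nat.card_coe_set_eq]
  rw [Nat.card_coe_set_eq, Nat.card_coe_set_eq, h2,
    Set.ncard_union_eq hd (Set.toFinite _) (Set.toFinite _)]


section
variable {n : ℕ}

lemma nd15_key {G Gs : SimpleGraph (Fin n)} (hG : G.IsAcyclic) {f : Fin n → ℝ}
    (hGs : ∀ a b, Gs.Adj a b ↔ (G.Adj a b ∧ f a ≠ 0 ∧ f b ≠ 0))
    {Λ : Set (Fin n)}
    (hΛ0 : ∀ s ∈ Λ, f s = 0)
    (hΛ2 : ∀ s ∈ Λ, ∃ y1 y2, y1 ≠ y2 ∧ G.Adj s y1 ∧ f y1 ≠ 0 ∧ G.Adj s y2 ∧ f y2 ≠ 0)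
    (hΛne : Λ.Nonempty) :
    ∃ s ∈ Λ, ∃ y, f y ≠ 0 ∧ G.Adj s y ∧ ∀ s' ∈ Λ, ∀ y', f y' ≠ 0 → G.Adj s' y' →
      Gs.connectedComponentMk y' = Gs.connectedComponentMk y → s' = s ∧ y' = y := by
  classical
  by_contra hcon
  push_neg at hcon
  -- hcon : ∀ s ∈ Λ, ∀ y, f y ≠ 0 → G.Adj s y → ∃ s' ∈ Λ, ∃ y', f y' ≠ 0 ∧ G.Adj s' y' ∧
  --    mk y' = mk y ∧ ¬(s' = s ∧ y' = y)
  have hGsle : Gs ≤ G := fun {a b} h => ((hGs a b).1 h).1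
  have hGs_isol : ∀ s, f s = 0 → ∀ b, ¬ Gs.Adj s b := by
    intro s hs b hb
    exact ((hGs s b).1 hb).2.1 hs
  set 𝒟 : Set Gs.ConnectedComponent :=
    {Dc | ∃ s ∈ Λ, ∃ y, f y ≠ 0 ∧ G.Adj s y ∧ Gs.connectedComponentMk y = Dc} with h𝒟
  set H0 : SimpleGraph (Fin n) := nd15R Gs 𝒟 with hH0
  set H1 : SimpleGraph (Fin n) := {
    Adj := fun a b => H0.Adj a b ∨ (a ∈ Λ ∧ f b ≠ 0 ∧ G.Adj a b) ∨
      (b ∈ Λ ∧ f a ≠ 0 ∧ G.Adj a b)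
    symm := by
      constructor
      rintro a b (h | ⟨h1, h2, h3⟩ | ⟨h1, h2, h3⟩)
      · exact Or.inl h.symm
      · exact Or.inr (Or.inr ⟨h1, h2, h3.symm⟩)
      · exact Or.inr (Or.inl ⟨h1, h2, h3.symm⟩)
    loopless := by
      constructor
      rintro a (h | ⟨h1, h2, h3⟩ | ⟨h1, h2, h3⟩)
      · exact H0.loopless.irrefl a h
      · exact G.loopless.irrefl a h3
      · exact G.loopless.irrefl a h3 } with hH1
  have hH0le : H0 ≤ G := fun {a b} h => hGsle ((nd15R_le Gs 𝒟) h)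
  have hH1le : H1 ≤ G := by
    rintro a b (h | ⟨h1, h2, h3⟩ | ⟨h1, h2, h3⟩)
    · exact hH0le h
    · exact h3
    · exact h3
  have hH0ac : H0.IsAcyclic := nd15_acyclic_mono hH0le hG
  have hH1ac : H1.IsAcyclic := nd15_acyclic_mono hH1le hG
  -- the pair set
  set P : Finset (Fin n × Fin n) :=
    Finset.univ.filter (fun p => p.1 ∈ Λ ∧ f p.2 ≠ 0 ∧ G.Adj p.1 p.2) with hP
  have hmemP : ∀ p : Fin n × Fin n, p ∈ P ↔ (p.1 ∈ Λ ∧ f p.2 ≠ 0 ∧ G.Adj p.1 p.2) := by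
    intro p; simp [hP]
  -- edge sets
  set ΛE : Set (Sym2 (Fin n)) := {e | ∃ p ∈ P, e = s(p.1, p.2)} with hΛE
  have hΛzero : ∀ s ∈ Λ, f s = 0 := hΛ0
  have hcardΛE : Nat.card ΛE = P.card := by
    have himg : ΛE = (fun p : Fin n × Fin n => s(p.1, p.2)) '' ↑P := by
      ext e
      simp only [hΛE, Set.mem_setOf_eq, Set.mem_image, Finset.mem_coe]
      constructor
      · rintro ⟨p, hp, rfl⟩; exact ⟨p, hp, rfl⟩
      · rintro ⟨p, hp, rfl⟩; exact ⟨p, hp, rfl⟩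
    rw [himg, Nat.card_coe_set_eq, Set.ncard_image_of_injOn, Set.ncard_coe_finset]
    intro p hp q hq he
    rw [Finset.mem_coe, hmemP] at hp hq
    rw [Sym2.eq_iff] at he
    rcases he with ⟨h1, h2⟩ | ⟨h1, h2⟩
    · exact Prod.ext h1 h2
    · exact absurd (hΛ0 _ hq.1) (h2 ▸ hp.2.1)
  -- edge set split
  have hedgesplit : H1.edgeSet = H0.edgeSet ∪ ΛE := by
    ext e
    induction e using Sym2.ind with
    | _ a b =>
      simp only [SimpleGraph.mem_edgeSet, Set.mem_union]
      constructor
      · rintro (h | ⟨h1, h2, h3⟩ | ⟨h1, h2, h3⟩)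
        · exact Or.inl h
        · exact Or.inr ⟨(a, b), (hmemP _).2 ⟨h1, h2, h3⟩, rfl⟩
        · exact Or.inr ⟨(b, a), (hmemP _).2 ⟨h1, h2, h3.symm⟩, Sym2.eq_swap.symm⟩
      · rintro (h | ⟨p, hp, he⟩)
        · exact Or.inl h
        · rw [hmemP] at hp
          rw [Sym2.eq_iff] at he
          rcases he with ⟨rfl, rfl⟩ | ⟨rfl, rfl⟩
          · exact Or.inr (Or.inl hp)
          · exact Or.inr (Or.inr ⟨hp.1, hp.2.1, hp.2.2.symm⟩)
  have hdisj : Disjoint H0.edgeSet ΛE := by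
    rw [Set.disjoint_left]
    intro e he hΛe
    obtain ⟨p, hp, rfl⟩ := hΛe
    rw [hmemP] at hp
    have : Gs.Adj p.1 p.2 := (nd15R_le Gs 𝒟) ((SimpleGraph.mem_edgeSet _).1 he)
    exact ((hGs p.1 p.2).1 this).2.1 (hΛ0 _ hp.1)
  have hE1 : Nat.card H1.edgeSet = Nat.card H0.edgeSet + P.card := by
    rw [hedgesplit, Nat.card_coe_set_eq, Set.ncard_union_eq hdisj (Set.toFinite _)
      (Set.toFinite _), ← Nat.card_coe_set_eq, ← Nat.card_coe_set_eq, hcardΛE]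
  -- fiber counting: each component in 𝒟 has at least two incident Λ-edges
  have h2D : 2 * Nat.card 𝒟 ≤ P.card := by
    have himg : 𝒟 = ↑(P.image (fun p => Gs.connectedComponentMk p.2)) := by
      ext Dc
      simp only [h𝒟, Set.mem_setOf_eq, Finset.coe_image, Set.mem_image, Finset.mem_coe]
      constructor
      · rintro ⟨s, hs, y, hy1, hy2, hy3⟩
        exact ⟨(s, y), (hmemP _).2 ⟨hs, hy1, hy2⟩, hy3⟩
      · rintro ⟨p, hp, rfl⟩
        rw [hmemP] at hp
        exact ⟨p.1, hp.1, p.2, hp.2.1, hp.2.2, rfl⟩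
    rw [himg, Nat.card_coe_set_eq, Set.ncard_coe_finset]
    refine nd15_two_mul_card_image_le P _ (fun b hb => ?_)
    rw [Finset.mem_image] at hb
    obtain ⟨p, hp, rfl⟩ := hb
    rw [hmemP] at hp
    obtain ⟨s', hs', y', hy1, hy2, hy3, hne⟩ := hcon p.1 hp.1 p.2 hp.2.1 hp.2.2
    have h2 : (1:ℕ) <
        (P.filter (fun a => Gs.connectedComponentMk a.2 = Gs.connectedComponentMk p.2)).card := by
      refine Finset.one_lt_card.2 ⟨(s', y'), ?_, p, ?_, ?_⟩
      · rw [Finset.mem_filter]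
        exact ⟨(hmemP _).2 ⟨hs', hy1, hy2⟩, hy3⟩
      · rw [Finset.mem_filter]
        exact ⟨(hmemP _).2 hp, rfl⟩
      · intro hc
        rw [Prod.ext_iff] at hc
        exact hne hc.1 hc.2
    omega
  have h2Λ : 2 * Nat.card Λ ≤ P.card := by
    have himg : Λ = ↑(P.image Prod.fst) := by
      ext s
      simp only [Finset.coe_image, Set.mem_image, Finset.mem_coe]
      constructor
      · intro hs
        obtain ⟨y1, y2, hne, ha1, hf1, ha2, hf2⟩ := hΛ2 s hs
        exact ⟨(s, y1), (hmemP _).2 ⟨hs, hf1, ha1⟩, rfl⟩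
      · rintro ⟨p, hp, rfl⟩
        exact ((hmemP _).1 hp).1
    rw [himg, Nat.card_coe_set_eq, Set.ncard_coe_finset]
    refine nd15_two_mul_card_image_le P _ (fun b hb => ?_)
    rw [Finset.mem_image] at hb
    obtain ⟨p, hp, rfl⟩ := hb
    have hp1 := ((hmemP _).1 hp).1
    obtain ⟨y1, y2, hne, ha1, hf1, ha2, hf2⟩ := hΛ2 p.1 hp1
    have h2 : (1:ℕ) < (P.filter (fun a => a.1 = p.1)).card := by
      refine Finset.one_lt_card.2 ⟨(p.1, y1), ?_, (p.1, y2), ?_, ?_⟩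
      · rw [Finset.mem_filter]; exact ⟨(hmemP _).2 ⟨hp1, hf1, ha1⟩, rfl⟩
      · rw [Finset.mem_filter]; exact ⟨(hmemP _).2 ⟨hp1, hf2, ha2⟩, rfl⟩
      · intro hc
        rw [Prod.ext_iff] at hc
        exact hne hc.2
    omega
  -- Λ-vertices are not in components of 𝒟
  have hΛnotD : ∀ s ∈ Λ, Gs.connectedComponentMk s ∉ 𝒟 := by
    intro s hs hmem
    obtain ⟨s1, hs1, y, hy1, hy2, hy3⟩ := hmem
    have heq : s = y := nd15_isolated_reach (hGs_isol s (hΛ0 s hs))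
      (SimpleGraph.ConnectedComponent.exact hy3).symm
    exact hy1 (heq ▸ hΛ0 s hs)
  -- component count for H0
  have hC0 : Nat.card H0.ConnectedComponent
      = Nat.card 𝒟 + Nat.card {v : Fin n // Gs.connectedComponentMk v ∉ 𝒟} :=
    nd15_card_cc_nd15R Gs 𝒟
  -- split the isolated part
  have hBsplit : Nat.card {v : Fin n | Gs.connectedComponentMk v ∉ 𝒟}
      = Nat.card {v : Fin n | Gs.connectedComponentMk v ∉ 𝒟 ∧ v ∉ Λ} + Nat.card Λ := by
    have h1 := nd15_card_split {v : Fin n | Gs.connectedComponentMk v ∉ 𝒟} (fun v => v ∉ Λ)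
    have h2 : {e : Fin n | e ∈ {v : Fin n | Gs.connectedComponentMk v ∉ 𝒟} ∧ ¬ e ∉ Λ} = Λ := by
      ext v
      simp only [Set.mem_setOf_eq, not_not]
      exact ⟨fun h => h.2, fun h => ⟨hΛnotD v h, h⟩⟩
    rw [h2] at h1
    have h3 : {e : Fin n | e ∈ {v : Fin n | Gs.connectedComponentMk v ∉ 𝒟} ∧ e ∉ Λ}
        = {v : Fin n | Gs.connectedComponentMk v ∉ 𝒟 ∧ v ∉ Λ} := rfl
    rw [h3] at h1
    omega
  -- isolated vertices in H1
  have hH1isol : ∀ v : Fin n, Gs.connectedComponentMk v ∉ 𝒟 → v ∉ Λ →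
      ∀ b, ¬ H1.Adj v b := by
    rintro v hv1 hv2 b (h | ⟨h1, h2, h3⟩ | ⟨h1, h2, h3⟩)
    · exact hv1 h.2
    · exact hv2 h1
    · exact hv1 ⟨b, h1, v, h2, h3.symm, rfl⟩
  obtain ⟨s0, hs0⟩ := hΛne
  have hC1 : Nat.card {v : Fin n | Gs.connectedComponentMk v ∉ 𝒟 ∧ v ∉ Λ} + 1
      ≤ Nat.card H1.ConnectedComponent := by
    have hinj : Function.Injective
        (fun x : Option ↥{v : Fin n | Gs.connectedComponentMk v ∉ 𝒟 ∧ v ∉ Λ} =>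
          match x with
          | some v => H1.connectedComponentMk v.val
          | none => H1.connectedComponentMk s0) := by
      rintro (_ | v) (_ | w) h
      · rfl
      · simp only at h
        have := nd15_isolated_reach (hH1isol w.val w.prop.1 w.prop.2)
          (SimpleGraph.ConnectedComponent.exact h.symm)
        exact absurd (this ▸ hs0) w.prop.2
      · simp only at h
        have := nd15_isolated_reach (hH1isol v.val v.prop.1 v.prop.2)
          (SimpleGraph.ConnectedComponent.exact h)
        exact absurd (this ▸ hs0) v.prop.2
      · simp only at h
        have := nd15_isolated_reach (hH1isol v.val v.prop.1 v.prop.2)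
          (SimpleGraph.ConnectedComponent.exact h)
        exact congrArg some (Subtype.ext this)
    have := Nat.card_le_card_of_injective _ hinj
    rw [Finite.card_option] at this
    omega
  have hΛpos : 1 ≤ Nat.card Λ := by
    have : Nonempty ↥Λ := ⟨⟨s0, hs0⟩⟩
    exact Nat.one_le_iff_ne_zero.2 (Nat.card_ne_zero.2 ⟨this, Set.toFinite _⟩)
  have hFF0 := nd15_forest_formula H0 hH0ac
  have hFF1 := nd15_forest_formula H1 hH1ac
  have hsame : Nat.card {v : Fin n // Gs.connectedComponentMk v ∉ 𝒟}
      = Nat.card {v : Fin n | Gs.connectedComponentMk v ∉ 𝒟} := rfl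
  omega
end

section
open Matrix Polynomial

lemma nd15_second_term {n : ℕ} (w : Fin n → ℝ) (hsum : ∑ y, w y = 0) {y0 : Fin n}
    (h0 : w y0 ≠ 0) : ∃ y1, y1 ≠ y0 ∧ w y1 ≠ 0 := by
  by_contra hc
  push_neg at hc
  have : ∑ y, w y = w y0 :=
    Finset.sum_eq_single_of_mem y0 (Finset.mem_univ _)
      (fun b _ hb => hc b hb)
  rw [hsum] at this
  exact h0 this.symm

theorem stmt_15' (n : ℕ) (A : Matrix (Fin n) (Fin n) ℝ) (hA : A.IsSymm)
    (G : SimpleGraph (Fin n)) (σ : Fin n → Fin n → ℝ)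
    (hcompat : (∀ x y, G.Adj x y ↔ x ≠ y ∧ A x y ≠ 0)) (hacyclic : G.IsAcyclic)
    (lam : ℝ) (f : Fin n → ℝ) (hf : f ≠ 0) (heig : A.mulVec f = lam • f)
    (F : Finset (Fin n)) (hF : ∀ x, x ∈ F ↔ (f x = 0 ∧ ∀ y, G.Adj x y → f y = 0))
    (r : ℕ) (hr : r = Module.finrank ℝ
      (LinearMap.ker (A - lam • (1 : Matrix (Fin n) (Fin n) ℝ)).mulVecLin))
    (rt : ℕ) (hrt : rt = Module.finrank ℝ (LinearMap.ker
      ((A.submatrix (fun i : {x : Fin n // x ∉ F} => (i : Fin n))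
          (fun i : {x : Fin n // x ∉ F} => (i : Fin n))
        - lam • 1).mulVecLin))) :
    rt ≤ r ∧
    rt + 2 * Nat.card {x : Fin n | f x = 0}
      = Nat.card {e : Sym2 (Fin n) | e ∈ G.edgeSet ∧ ∃ x ∈ e, f x = 0}
        + Nat.card G.ConnectedComponent + F.card := by
  classical
  -- matrix basics
  set B : Matrix (Fin n) (Fin n) ℝ := A - lam • 1 with hB
  have hBapp : ∀ x y, B x y = A x y - lam * (if x = y then 1 else 0) := by
    intro x y
    simp [hB, Matrix.sub_apply, Matrix.smul_apply, Matrix.one_apply, smul_eq_mul]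
  have hBoff : ∀ x y, x ≠ y → B x y = A x y := by
    intro x y h; rw [hBapp, if_neg h]; ring
  have hAsym : ∀ x y, A x y = A y x := fun x y => (hA.apply y x)
  have hBsym : ∀ x y, B x y = B y x := by
    intro x y; rw [hBapp, hBapp, hAsym]
    by_cases h : x = y
    · subst h; simp
    · rw [if_neg h, if_neg (Ne.symm h)]
  have hadjB : ∀ x y, x ≠ y → B x y ≠ 0 → G.Adj x y := by
    intro x y hne h0
    exact (hcompat x y).2 ⟨hne, by rwa [hBoff x y hne] at h0⟩
  have hadjA' : ∀ x y, G.Adj x y → A x y ≠ 0 := fun x y h => ((hcompat x y).1 h).2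
  have hadjne : ∀ x y, G.Adj x y → x ≠ y := fun x y h => ((hcompat x y).1 h).1
  have hadjB' : ∀ x y, G.Adj x y → B x y ≠ 0 := by
    intro x y h
    rw [hBoff x y (hadjne x y h)]
    exact hadjA' x y h
  have hBsum_eq : ∀ (v : Fin n → ℝ) (x : Fin n),
      ∑ y, B x y * v y = (∑ y, A x y * v y) - lam * v x := by
    intro v x
    have : ∀ y, B x y * v y = A x y * v y - (if x = y then lam * v y else 0) := by
      intro y
      rw [hBapp]
      by_cases h : x = y <;> simp [h] <;> ring
    rw [Finset.sum_congr rfl (fun y _ => this y), Finset.sum_sub_distrib,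
      Finset.sum_ite_eq, if_pos (Finset.mem_univ x)]
  have hBf : ∀ x, ∑ y, B x y * f y = 0 := by
    intro x
    have hx := congrFun heig x
    have hx2 : ∑ y, A x y * f y = lam * f x := by
      have h1 : (A *ᵥ f) x = ∑ y, A x y * f y := by simp [Matrix.mulVec, dotProduct]
      rw [← h1, hx]; simp
    rw [hBsum_eq f x, hx2, sub_self]
  -- zero-set basics
  have hFzero : ∀ x ∈ F, f x = 0 := fun x hx => ((hF x).1 hx).1
  have hFnbr : ∀ x ∈ F, ∀ y, G.Adj x y → f y = 0 := fun x hx => ((hF x).1 hx).2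
  have hSmem : ∀ x, x ∉ F → f x = 0 → ∃ y, G.Adj x y ∧ f y ≠ 0 := by
    intro x hx h0
    by_contra hc
    push_neg at hc
    exact hx ((hF x).2 ⟨h0, fun y hy => hc y hy⟩)
  -- extension by zero
  set ext : ({x : Fin n // x ∉ F} → ℝ) → (Fin n → ℝ) :=
    fun g x => if h : x ∈ F then 0 else g ⟨x, h⟩ with hext
  have hext_val : ∀ g (j : {x : Fin n // x ∉ F}), ext g j.val = g j := by
    intro g j; rw [hext]; simp [j.prop]
  have hext_F : ∀ g x, x ∈ F → ext g x = 0 := by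
    intro g x hx; rw [hext]; simp [hx]
  set Bt : Matrix {x : Fin n // x ∉ F} {x : Fin n // x ∉ F} ℝ :=
    (A.submatrix (fun i : {x : Fin n // x ∉ F} => (i : Fin n))
          (fun i : {x : Fin n // x ∉ F} => (i : Fin n)) - lam • 1) with hBt
  have hBtapp : ∀ i j : {x : Fin n // x ∉ F}, Bt i j = B i.val j.val := by
    intro i j
    rw [hBt, hBapp]
    simp only [Matrix.sub_apply, Matrix.submatrix_apply, Matrix.smul_apply, Matrix.one_apply,
      smul_eq_mul]
    congr 1
    by_cases h : i = j
    · rw [if_pos h, if_pos (congrArg Subtype.val h)]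
    · rw [if_neg h, if_neg (fun hv => h (Subtype.ext hv))]
  have hsum_ext : ∀ g (x : Fin n), ∑ y, B x y * ext g y
      = ∑ j : {x : Fin n // x ∉ F}, B x j.val * g j := by
    intro g x
    have h1 : ∑ j : {x : Fin n // x ∉ F}, B x j.val * g j
        = ∑ j : {x : Fin n // x ∉ F}, B x j.val * ext g j.val :=
      Finset.sum_congr rfl (fun j _ => by rw [hext_val])
    have h2 : ∑ y ∈ Finset.univ.filter (fun y : Fin n => y ∉ F), B x y * ext g y
        = ∑ j : {x : Fin n // x ∉ F}, B x j.val * ext g j.val :=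
      Finset.sum_subtype _ (by intro y; simp) _
    have h3 : ∑ y ∈ Finset.univ.filter (fun y : Fin n => y ∉ F), B x y * ext g y
        = ∑ y, B x y * ext g y :=
      Finset.sum_filter_of_ne (by
        intro y _ hy hyF
        exact hy (by rw [hext_F g y hyF, mul_zero]))
    rw [h1, ← h2, h3]
  have hkerBt : ∀ g : {x : Fin n // x ∉ F} → ℝ,
      Bt.mulVec g = 0 ↔ ∀ x : Fin n, x ∉ F → ∑ y, B x y * ext g y = 0 := by
    intro g
    have hmv : ∀ i, Bt.mulVec g i = ∑ j, B i.val j.val * g j := by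
      intro i
      have : Bt.mulVec g i = ∑ j, Bt i j * g j := by
        simp [Matrix.mulVec, dotProduct]
      rw [this]
      exact Finset.sum_congr rfl fun j _ => by rw [hBtapp]
    constructor
    · intro hg x hx
      have h := congrFun hg ⟨x, hx⟩
      rw [hmv] at h
      rw [hsum_ext]
      exact h
    · intro h
      funext i
      have h2 := h i.val i.prop
      rw [hsum_ext] at h2
      rw [Pi.zero_apply, hmv]
      exact h2
  have hprops : ∀ g : {x : Fin n // x ∉ F} → ℝ, Bt.mulVec g = 0 →
      (∀ u v, G.Adj u v → f u * ext g v = f v * ext g u) ∧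
      (∀ x, f x = 0 → ext g x = 0) ∧
      (∀ x, ∑ y, B x y * ext g y = 0) := by
    intro g hg
    have hoff : ∀ x, x ∉ F → ∑ y, B x y * ext g y = 0 := (hkerBt g).1 hg
    have hfB : ∀ x, f x * (∑ y, B x y * ext g y) = 0 := by
      intro x
      by_cases hx : x ∈ F
      · rw [hFzero x hx, zero_mul]
      · rw [hoff x hx, mul_zero]
    have hwr : ∀ u v, G.Adj u v → f u * ext g v = f v * ext g u :=
      fun u v h => nd15_wronskian hacyclic hBsym hadjB hadjB' hBf hfB h
    have hzero : ∀ x, f x = 0 → ext g x = 0 := by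
      intro x h0
      by_cases hx : x ∈ F
      · exact hext_F g x hx
      · obtain ⟨y, hy, hfy⟩ := hSmem x hx h0
        have h2 := hwr y x hy.symm
        rw [h0, zero_mul] at h2
        exact (mul_eq_zero.mp h2).resolve_left hfy
    refine ⟨hwr, hzero, fun x => ?_⟩
    by_cases hx : x ∈ F
    · refine Finset.sum_eq_zero (fun y _ => ?_)
      by_cases hfy : f y = 0
      · rw [hzero y hfy, mul_zero]
      · by_cases hBy : B x y = 0
        · rw [hBy, zero_mul]
        · have hxy : x ≠ y := by
            rintro rfl
            exact hfy (hFzero x hx)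
          have : G.Adj x y := hadjB x y hxy hBy
          exact absurd (hFnbr x hx y this) hfy
    · exact hoff x hx
  -- Part 1 : rt ≤ r
  have hpart1 : rt ≤ r := by
    rw [hr, hrt]
    let L : ({x : Fin n // x ∉ F} → ℝ) →ₗ[ℝ] (Fin n → ℝ) := {
      toFun := ext
      map_add' := by intro a b; funext x; by_cases h : x ∈ F <;> simp [hext, h]
      map_smul' := by intro c a; funext x; by_cases h : x ∈ F <;> simp [hext, h] }
    have hLg : ∀ g, L g = ext g := fun g => rfl
    have hmem : ∀ c : LinearMap.ker Bt.mulVecLin,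
        (L.comp (LinearMap.ker Bt.mulVecLin).subtype) c ∈ LinearMap.ker B.mulVecLin := by
      intro c
      rw [LinearMap.mem_ker, Matrix.mulVecLin_apply]
      have hg : Bt.mulVec c.val = 0 := by
        have := c.prop
        rwa [LinearMap.mem_ker, Matrix.mulVecLin_apply] at this
      have hall := (hprops c.val hg).2.2
      funext x
      simp only [LinearMap.comp_apply, Submodule.subtype_apply, hLg, Pi.zero_apply]
      have : B.mulVec (ext c.val) x = ∑ y, B x y * ext c.val y := by
        simp [Matrix.mulVec, dotProduct]
      rw [this]
      exact hall x
    let φ := LinearMap.codRestrict (LinearMap.ker B.mulVecLin)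
      (L.comp (LinearMap.ker Bt.mulVecLin).subtype) hmem
    have hφinj : Function.Injective φ := by
      intro c1 c2 hc
      have h1 : L c1.val = L c2.val := by
        have := congrArg Subtype.val hc
        simpa [φ] using this
      apply Subtype.ext
      funext j
      have h2 := congrFun h1 j.val
      rwa [hLg, hLg, hext_val, hext_val] at h2
    exact LinearMap.finrank_le_finrank_of_injective hφinj
  refine ⟨hpart1, ?_⟩
  -- the support graph
  set Gs : SimpleGraph (Fin n) := {
    Adj := fun x y => G.Adj x y ∧ f x ≠ 0 ∧ f y ≠ 0
    symm := ⟨fun x y h => ⟨h.1.symm, h.2.2, h.2.1⟩⟩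
    loopless := ⟨fun x h => G.loopless.irrefl x h.1⟩ } with hGsdef
  have hGs : ∀ a b, Gs.Adj a b ↔ (G.Adj a b ∧ f a ≠ 0 ∧ f b ≠ 0) := fun a b => Iff.rfl
  haveI : Finite Gs.ConnectedComponent := Quot.finite _
  haveI : Finite G.ConnectedComponent := Quot.finite _
  set KD : Set Gs.ConnectedComponent :=
    {Dc | ∃ v, f v ≠ 0 ∧ Gs.connectedComponentMk v = Dc} with hKD
  have hGseq : nd15R Gs KD = Gs := by
    ext a b
    constructor
    · exact fun h => h.1
    · intro h
      exact ⟨h, ⟨a, ((hGs a b).1 h).2.1, rfl⟩⟩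
  have hccGs : Nat.card Gs.ConnectedComponent
      = Nat.card KD + Nat.card {x : Fin n | f x = 0} := by
    have h1 := nd15_card_cc_nd15R Gs KD
    rw [hGseq] at h1
    rw [h1]
    congr 1
    refine Nat.card_congr (Equiv.subtypeEquivRight (fun v => ?_))
    constructor
    · intro hv
      by_contra hfv
      exact hv ⟨v, hfv, rfl⟩
    · intro hfv hv
      obtain ⟨w, hw1, hw2⟩ := hv
      have hisol : ∀ b, ¬ Gs.Adj v b := fun b hb => ((hGs v b).1 hb).2.1 hfv
      have hvw : v = w := nd15_isolated_reach hisol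
        (SimpleGraph.ConnectedComponent.exact hw2.symm)
      exact hw1 (hvw ▸ hfv)
  have hGsedge : Gs.edgeSet = {e : Sym2 (Fin n) | e ∈ G.edgeSet ∧ ¬ ∃ x ∈ e, f x = 0} := by
    ext e
    induction e using Sym2.ind with
    | _ a b =>
      simp only [SimpleGraph.mem_edgeSet, Set.mem_setOf_eq, Sym2.mem_iff]
      constructor
      · intro h
        refine ⟨h.1, ?_⟩
        rintro ⟨x, (rfl | rfl), hx⟩
        · exact h.2.1 hx
        · exact h.2.2 hx
      · rintro ⟨h1, h2⟩
        refine ⟨h1, ?_, ?_⟩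
        · intro hfa; exact h2 ⟨a, Or.inl rfl, hfa⟩
        · intro hfb; exact h2 ⟨b, Or.inr rfl, hfb⟩
  have hsplitE := nd15_card_split G.edgeSet (fun e => ∃ x ∈ e, f x = 0)
  have he1eq : Nat.card {e : Sym2 (Fin n) | e ∈ G.edgeSet ∧ ¬ ∃ x ∈ e, f x = 0}
      = Nat.card Gs.edgeSet := by rw [hGsedge]
  have hFFG := nd15_forest_formula G hacyclic
  have hFFGs := nd15_forest_formula Gs (nd15_acyclic_mono (fun _ _ hab => hab.1) hacyclic)
  -- zero split
  have hzsplit := nd15_card_split {x : Fin n | f x = 0} (fun x => x ∉ F)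
  have hFset : Nat.card {e : Fin n | e ∈ {x : Fin n | f x = 0} ∧ ¬ e ∉ F} = F.card := by
    have h2 : {e : Fin n | e ∈ {x : Fin n | f x = 0} ∧ ¬ e ∉ F} = ↑F := by
      ext x
      simp only [Set.mem_setOf_eq, not_not, Finset.mem_coe]
      exact ⟨fun h => h.2, fun h => ⟨hFzero x h, h⟩⟩
    rw [h2, Nat.card_coe_set_eq, Set.ncard_coe_finset]
  set St : Set (Fin n) := {x : Fin n | f x = 0 ∧ x ∉ F} with hSt
  have hStsame : Nat.card {e : Fin n | e ∈ {x : Fin n | f x = 0} ∧ e ∉ F}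
      = Nat.card St :=
    Nat.card_congr (Equiv.subtypeEquivRight (fun x => Iff.rfl))
  -- every strong zero has two nonzero neighbours
  have hStwo : ∀ s, f s = 0 → s ∉ F → ∃ y1 y2, y1 ≠ y2 ∧ G.Adj s y1 ∧ f y1 ≠ 0 ∧
      G.Adj s y2 ∧ f y2 ≠ 0 := by
    intro s h0 hsF
    obtain ⟨y0, hy0a, hy0f⟩ := hSmem s hsF h0
    have hterm : B s y0 * f y0 ≠ 0 := mul_ne_zero (hadjB' s y0 hy0a) hy0f
    obtain ⟨y1, hne, h1⟩ := nd15_second_term _ (hBf s) hterm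
    have hfy1 : f y1 ≠ 0 := fun hc => h1 (by rw [hc, mul_zero])
    have hy1s : y1 ≠ s := fun hc => hfy1 (hc ▸ h0)
    have hB1 : B s y1 ≠ 0 := fun hc => h1 (by rw [hc, zero_mul])
    exact ⟨y1, y0, hne, hadjB s y1 (Ne.symm hy1s) hB1, hfy1, hy0a, hy0f⟩
  -- linear algebra setup
  haveI : Fintype ↥KD := Fintype.ofFinite _
  haveI : Fintype ↥St := Fintype.ofFinite _
  set ext2 : (↥KD → ℝ) → (Fin n → ℝ) := fun t y =>
    if h : f y ≠ 0 then f y * t ⟨Gs.connectedComponentMk y, ⟨y, h, rfl⟩⟩ else 0 with hext2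
  have hext2_zero : ∀ t y, f y = 0 → ext2 t y = 0 := by
    intro t y h; rw [hext2]; simp [h]
  have hext2_nz : ∀ t y (h : f y ≠ 0), ext2 t y
      = f y * t ⟨Gs.connectedComponentMk y, ⟨y, h, rfl⟩⟩ := by
    intro t y h; rw [hext2]; simp only [dif_pos h]
  have hext2_add : ∀ t1 t2, ext2 (t1 + t2) = ext2 t1 + ext2 t2 := by
    intro t1 t2; funext y
    by_cases h : f y ≠ 0
    · simp only [Pi.add_apply, hext2_nz _ _ h]; ring
    · push_neg at h
      simp only [Pi.add_apply, hext2_zero _ _ h]; ring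
  have hext2_smul : ∀ (c : ℝ) t, ext2 (c • t) = c • ext2 t := by
    intro c t; funext y
    by_cases h : f y ≠ 0
    · simp only [Pi.smul_apply, hext2_nz _ _ h, smul_eq_mul]; ring
    · push_neg at h
      simp only [Pi.smul_apply, hext2_zero _ _ h, smul_eq_mul]; ring
  set Mmap : (↥KD → ℝ) →ₗ[ℝ] (↥St → ℝ) := {
    toFun := fun t s => ∑ y, A s.val y * ext2 t y
    map_add' := by
      intro t1 t2
      funext s
      show ∑ y, A s.val y * ext2 (t1 + t2) y
          = (∑ y, A s.val y * ext2 t1 y) + ∑ y, A s.val y * ext2 t2 y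
      rw [← Finset.sum_add_distrib]
      refine Finset.sum_congr rfl fun y _ => ?_
      rw [hext2_add]
      simp only [Pi.add_apply]
      ring
    map_smul' := by
      intro c t
      funext s
      show ∑ y, A s.val y * ext2 (c • t) y = c * ∑ y, A s.val y * ext2 t y
      rw [Finset.mul_sum]
      refine Finset.sum_congr rfl fun y _ => ?_
      rw [hext2_smul]
      simp only [Pi.smul_apply, smul_eq_mul]
      ring } with hMmap
  have hMapp : ∀ t s, Mmap t s = ∑ y, A s.val y * ext2 t y := fun t s => rfl
  -- the lift of component functions to W
  set ΨW : (↥KD → ℝ) →ₗ[ℝ] ({x : Fin n // x ∉ F} → ℝ) := {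
    toFun := fun t j => ext2 t j.val
    map_add' := by
      intro t1 t2
      funext j
      show ext2 (t1 + t2) j.val = ext2 t1 j.val + ext2 t2 j.val
      rw [hext2_add]; rfl
    map_smul' := by
      intro c t
      funext j
      show ext2 (c • t) j.val = c * ext2 t j.val
      rw [hext2_smul]; rfl } with hΨW
  have hΨapp : ∀ t j, ΨW t j = ext2 t j.val := fun t j => rfl
  have hextΨ : ∀ t, ext (ΨW t) = ext2 t := by
    intro t; funext x
    by_cases hx : x ∈ F
    · rw [hext_F _ x hx, hext2_zero t x (hFzero x hx)]
    · rw [show ext (ΨW t) x = ΨW t ⟨x, hx⟩ from hext_val _ ⟨x, hx⟩]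
      rfl
  have hcompKey : ∀ (t : ↥KD → ℝ) (w y : Fin n) (hw : f w ≠ 0), B w y * ext2 t y
      = B w y * f y * t ⟨Gs.connectedComponentMk w, ⟨w, hw, rfl⟩⟩ := by
    intro t w y hw
    by_cases hy : f y = 0
    · simp [hext2_zero t y hy, hy]
    · rw [hext2_nz t y hy]
      by_cases hB0 : B w y = 0
      · rw [hB0, zero_mul, zero_mul, zero_mul]
      · have hDeq : (⟨Gs.connectedComponentMk y, ⟨y, hy, rfl⟩⟩ : ↥KD)
            = ⟨Gs.connectedComponentMk w, ⟨w, hw, rfl⟩⟩ := by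
          apply Subtype.ext
          show Gs.connectedComponentMk y = Gs.connectedComponentMk w
          by_cases hxy : w = y
          · subst hxy; rfl
          · exact SimpleGraph.ConnectedComponent.connectedComponentMk_eq_of_adj
              ((hGs y w).2 ⟨(hadjB w y hxy hB0).symm, hy, hw⟩)
        rw [hDeq]; ring
  have hclaimA : ∀ t : ↥KD → ℝ, Mmap t = 0 → Bt.mulVec (ΨW t) = 0 := by
    intro t ht
    rw [hkerBt]
    intro x hx
    have hsum2 : (∑ y, B x y * ext (ΨW t) y) = ∑ y, B x y * ext2 t y := by
      rw [hextΨ]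
    rw [hsum2]
    by_cases hfx : f x = 0
    · have hxSt : x ∈ St := ⟨hfx, hx⟩
      have h1 : Mmap t ⟨x, hxSt⟩ = 0 := by rw [ht]; rfl
      rw [hMapp] at h1
      rw [hBsum_eq (ext2 t) x, hext2_zero t x hfx, mul_zero, sub_zero]
      exact h1
    · rw [Finset.sum_congr rfl (fun y _ => hcompKey t x y hfx)]
      rw [← Finset.sum_mul, hBf, zero_mul]
  have hΨinj : Function.Injective ΨW := by
    rw [injective_iff_map_eq_zero]
    intro t ht
    funext D
    obtain ⟨Dc, v, hv, hmk⟩ := D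
    have hvF : v ∉ F := fun hc => hv (hFzero v hc)
    have h1 : ΨW t ⟨v, hvF⟩ = 0 := by rw [ht]; rfl
    rw [hΨapp] at h1
    rw [hext2_nz t v hv] at h1
    have h2 := (mul_eq_zero.mp h1).resolve_left hv
    have h3 : (⟨Gs.connectedComponentMk v, ⟨v, hv, rfl⟩⟩ : ↥KD) = ⟨Dc, ⟨v, hv, hmk⟩⟩ :=
      Subtype.ext hmk
    rw [h3] at h2
    exact h2
  have hclaimC : ∀ g : {x : Fin n // x ∉ F} → ℝ, Bt.mulVec g = 0 →
      ∃ t : ↥KD → ℝ, Mmap t = 0 ∧ ΨW t = g := by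
    intro g hg
    obtain ⟨hwr, hzero, hall⟩ := hprops g hg
    have hratio : ∀ a b, Gs.Walk a b → f a * ext g b = f b * ext g a := by
      intro a b p
      induction p with
      | nil => rfl
      | @cons a c b h p ih =>
        have h1 := hwr a c h.1
        have hfc : f c ≠ 0 := h.2.2
        refine mul_left_cancel₀ hfc ?_
        linear_combination f a * ih + f b * h1
    set t : ↥KD → ℝ := fun D => ext g D.prop.choose / f D.prop.choose with htdef
    have hrep : ∀ D : ↥KD, f D.prop.choose ≠ 0 ∧
        Gs.connectedComponentMk D.prop.choose = D.val := fun D => D.prop.choose_spec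
    have hext2tg : ext2 t = ext g := by
      funext y
      by_cases hy : f y = 0
      · rw [hext2_zero t y hy, hzero y hy]
      · rw [hext2_nz t y hy]
        set D : ↥KD := ⟨Gs.connectedComponentMk y, ⟨y, hy, rfl⟩⟩ with hDdef
        obtain ⟨hw1, hw2⟩ := hrep D
        have hw2' : Gs.connectedComponentMk D.prop.choose = Gs.connectedComponentMk y := hw2
        obtain ⟨p⟩ := SimpleGraph.ConnectedComponent.exact hw2'
        have hr := hratio _ y p
        have ht1 : t D = ext g D.prop.choose / f D.prop.choose := rfl
        rw [ht1, ← mul_div_assoc, div_eq_iff hw1]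
        linear_combination -hr
    refine ⟨t, ?_, ?_⟩
    · funext s
      have hs0 : f s.val = 0 := s.prop.1
      have h2 := hall s.val
      rw [hBsum_eq (ext g) s.val, hzero s.val hs0, mul_zero, sub_zero] at h2
      rw [Pi.zero_apply, hMapp, hext2tg]
      exact h2
    · funext j
      rw [hΨapp, hext2tg, hext_val]
  -- rt equals the kernel dimension of Mmap
  have hrtk : rt = Module.finrank ℝ (LinearMap.ker Mmap) := by
    rw [hrt]
    let φ2 := LinearMap.codRestrict (LinearMap.ker Bt.mulVecLin)
      (ΨW.comp (LinearMap.ker Mmap).subtype) (fun c => by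
        rw [LinearMap.mem_ker, Matrix.mulVecLin_apply]
        exact hclaimA c.val (LinearMap.mem_ker.1 c.prop))
    have hbij : Function.Bijective φ2 := by
      constructor
      · intro c1 c2 hc
        apply Subtype.ext
        apply hΨinj
        have := congrArg Subtype.val hc
        simpa [φ2] using this
      · rintro ⟨g, hg⟩
        obtain ⟨t, hMt, hΨt⟩ := hclaimC g
          (by rwa [LinearMap.mem_ker, Matrix.mulVecLin_apply] at hg)
        refine ⟨⟨t, LinearMap.mem_ker.2 hMt⟩, ?_⟩
        apply Subtype.ext
        simpa [φ2] using hΨt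
    exact (LinearEquiv.finrank_eq (LinearEquiv.ofBijective φ2 hbij)).symm
  -- surjectivity of Mmap
  have hMsurj : Function.Surjective Mmap := by
    rw [← LinearMap.dualMap_injective_iff]
    rw [injective_iff_map_eq_zero]
    intro ξ hξ
    set lamv : ↥St → ℝ := fun s => ξ (fun j => if s = j then (1:ℝ) else 0) with hlamv
    have hξv : ∀ v : ↥St → ℝ, ξ v = ∑ s, v s * lamv s := by
      intro v
      conv_lhs => rw [pi_eq_sum_univ v]
      rw [map_sum]
      refine Finset.sum_congr rfl fun s _ => ?_
      rw [LinearMap.map_smul, smul_eq_mul]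
    have hMzero : ∀ t, ξ (Mmap t) = 0 := by
      intro t
      have h1 := LinearMap.congr_fun hξ t
      rwa [LinearMap.dualMap_apply, LinearMap.zero_apply] at h1
    have hlam0 : ∀ s, lamv s = 0 := by
      by_contra hc
      push_neg at hc
      obtain ⟨sbad, hsbad⟩ := hc
      set Λ : Set (Fin n) := {x | ∃ h : x ∈ St, lamv ⟨x, h⟩ ≠ 0} with hΛdef
      have hΛ0 : ∀ s' ∈ Λ, f s' = 0 := by rintro s' ⟨h, -⟩; exact h.1
      have hΛ2' : ∀ s' ∈ Λ, ∃ y1 y2, y1 ≠ y2 ∧ G.Adj s' y1 ∧ f y1 ≠ 0 ∧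
          G.Adj s' y2 ∧ f y2 ≠ 0 := by
        rintro s' ⟨h, -⟩; exact hStwo s' h.1 h.2
      have hΛne : Λ.Nonempty := ⟨sbad.val, sbad.prop, hsbad⟩
      obtain ⟨sst, hsstΛ, yst, hyst, hadjst, huniq⟩ :=
        nd15_key hacyclic hGs hΛ0 hΛ2' hΛne
      obtain ⟨hsstSt, hlamsst⟩ := hsstΛ
      set D0 : ↥KD := ⟨Gs.connectedComponentMk yst, ⟨yst, hyst, rfl⟩⟩ with hD0
      set eD : ↥KD → ℝ := fun D => if D = D0 then 1 else 0 with heD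
      have h0 := hMzero eD
      rw [hξv] at h0
      -- single nonzero term
      have hMother : ∀ s : ↥St, s.val ∈ Λ → s.val ≠ sst → Mmap eD s = 0 := by
        intro s hsΛ hssst
        rw [hMapp]
        refine Finset.sum_eq_zero (fun y _ => ?_)
        by_cases hfy : f y = 0
        · rw [hext2_zero _ y hfy, mul_zero]
        · rw [hext2_nz _ y hfy]
          by_cases hD : (⟨Gs.connectedComponentMk y, ⟨y, hfy, rfl⟩⟩ : ↥KD) = D0
          · by_cases hA0 : A s.val y = 0
            · rw [hA0, zero_mul]
            · have hys : y ≠ s.val := fun hcon => hfy (hcon ▸ s.prop.1)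
              have hadjsy : G.Adj s.val y := (hcompat s.val y).2 ⟨Ne.symm hys, hA0⟩
              have hmkeq : Gs.connectedComponentMk y = Gs.connectedComponentMk yst :=
                congrArg Subtype.val hD
              exact absurd ((huniq s.val hsΛ y hfy hadjsy hmkeq).1) hssst
          · have h2 : eD ⟨Gs.connectedComponentMk y, ⟨y, hfy, rfl⟩⟩ = 0 := if_neg hD
            rw [h2, mul_zero, mul_zero]
      have hsstΛ' : sst ∈ Λ := ⟨hsstSt, hlamsst⟩
      have hMsst : Mmap eD ⟨sst, hsstSt⟩ = A sst yst * f yst := by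
        rw [hMapp]
        rw [Finset.sum_eq_single_of_mem yst (Finset.mem_univ _)]
        · rw [hext2_nz _ yst hyst]
          have h1 : eD ⟨Gs.connectedComponentMk yst, ⟨yst, hyst, rfl⟩⟩ = 1 := if_pos rfl
          rw [h1, mul_one]
        · intro b _ hb
          by_cases hfb : f b = 0
          · rw [hext2_zero _ b hfb, mul_zero]
          · rw [hext2_nz _ b hfb]
            by_cases hD : (⟨Gs.connectedComponentMk b, ⟨b, hfb, rfl⟩⟩ : ↥KD) = D0
            · by_cases hA0 : A sst b = 0
              · rw [hA0, zero_mul]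
              · have hbs : b ≠ sst := fun hcon => hfb (hcon ▸ hΛ0 sst hsstΛ')
                have hadjsb : G.Adj sst b := (hcompat sst b).2 ⟨Ne.symm hbs, hA0⟩
                have hmkeq : Gs.connectedComponentMk b = Gs.connectedComponentMk yst :=
                  congrArg Subtype.val hD
                exact absurd (huniq sst hsstΛ' b hfb hadjsb hmkeq).2 hb
            · have h2 : eD ⟨Gs.connectedComponentMk b, ⟨b, hfb, rfl⟩⟩ = 0 := if_neg hD
              rw [h2, mul_zero, mul_zero]
      have hsum_single : ∑ s : ↥St, Mmap eD s * lamv s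
          = Mmap eD ⟨sst, hsstSt⟩ * lamv ⟨sst, hsstSt⟩ := by
        refine Finset.sum_eq_single_of_mem _ (Finset.mem_univ _) (fun b _ hb => ?_)
        by_cases hlb : lamv b = 0
        · rw [hlb, mul_zero]
        · have hbΛ : b.val ∈ Λ := ⟨b.prop, hlb⟩
          have hbne : b.val ≠ sst := fun hcon => hb (Subtype.ext hcon)
          rw [hMother b hbΛ hbne, zero_mul]
      rw [hsum_single, hMsst] at h0
      exact (mul_ne_zero (mul_ne_zero (hadjA' sst yst hadjst) hyst) hlamsst) h0
    have : ξ = 0 := by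
      refine LinearMap.ext (fun v => ?_)
      rw [hξv, LinearMap.zero_apply]
      exact Finset.sum_eq_zero (fun s _ => by rw [hlam0, mul_zero])
    exact this
  -- rank--nullity
  have hrank := LinearMap.finrank_range_add_finrank_ker Mmap
  rw [LinearMap.range_eq_top.2 hMsurj, finrank_top, Module.finrank_pi, Module.finrank_pi]
    at hrank
  have hA5 : rt + Nat.card ↥St = Nat.card ↥KD := by
    rw [hrtk, Nat.card_eq_fintype_card, Nat.card_eq_fintype_card]
    omega
  omega

end


/-- multiplicity formula for acyclic matrices, r ≥ r̃ and
r̃ = e₀ - 2z + c + |F|. -/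
theorem stmt_15 (n : ℕ) (A : Matrix (Fin n) (Fin n) ℝ) (hA : A.IsSymm)
    (G : SimpleGraph (Fin n)) (σ : Fin n → Fin n → ℝ)
    (hσ : IsSignature G σ) (hcompat : Compatible A G σ) (hacyclic : G.IsAcyclic)
    (lam : ℝ) (f : Fin n → ℝ) (hf : f ≠ 0) (heig : A.mulVec f = lam • f)
    (F : Finset (Fin n)) (hF : ∀ x, x ∈ F ↔ (f x = 0 ∧ ∀ y, G.Adj x y → f y = 0))
    (r : ℕ) (hr : r = Module.finrank ℝ
      (LinearMap.ker (A - lam • (1 : Matrix (Fin n) (Fin n) ℝ)).mulVecLin))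
    (rt : ℕ) (hrt : rt = Module.finrank ℝ (LinearMap.ker
      ((A.submatrix (fun i : {x : Fin n // x ∉ F} => (i : Fin n))
          (fun i : {x : Fin n // x ∉ F} => (i : Fin n))
        - lam • 1).mulVecLin))) :
    rt ≤ r ∧
    rt + 2 * Nat.card {x : Fin n | f x = 0}
      = Nat.card {e : Sym2 (Fin n) | e ∈ G.edgeSet ∧ ∃ x ∈ e, f x = 0}
        + Nat.card G.ConnectedComponent + F.card :=
  stmt_15' n A hA G σ hcompat.1 hacyclic lam f hf heig F hF r hr rt hrt
end
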